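/- arXiv:1809.05178 — 3 statements merged into one kernel-verified Lean document; each statement's English description precedes it below -/
import Mathlib

section
/- Let f ∈ L¹(0,1) with f(x) ≠ 0 for almost every x ∈ (0,1). Let a ∈ 𝒜 and let (a_n) be a sequence in 𝒜, with associated solutions u_a and u_{a_n}. If ∫₀¹ |u_{a_n}'(x) − u_a'(x)|² dx → 0 as n → ∞, then for every p ∈ [1, ∞), ∫₀¹ |a_n(x) − a(x)|^p dx → 0 as n → ∞. -/
open MeasureTheory Set Filter

noncomputable section

/-- The admissible set `𝒜`: measurable coefficients with `lam ≤ a ≤ Lam` a.e. on `(0,1)`. -/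
def MemAdm (lam Lam : ℝ) (a : ℝ → ℝ) : Prop :=
  Measurable a ∧ ∀ᵐ x ∂(volume.restrict (Ioo (0 : ℝ) 1)), lam ≤ a x ∧ a x ≤ Lam

/-- The primitive `F(x) = ∫₀ˣ f(t) dt`. -/
def Fprim (f : ℝ → ℝ) (x : ℝ) : ℝ := ∫ t in (0 : ℝ)..x, f t

/-- The constant `C_a = (∫₀¹ 1/a)⁻¹ ∫₀¹ F/a`. -/
def Cconst (f a : ℝ → ℝ) : ℝ :=
  (∫ x in Ioo (0 : ℝ) 1, 1 / a x)⁻¹ * ∫ x in Ioo (0 : ℝ) 1, Fprim f x / a x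

/-- `u` is the solution associated with the coefficient `a` and right-hand side `f`:
`u` is continuous on `[0,1]` with `u(0) = u(1) = 0`, differentiable a.e. on `(0,1)`, and
`a u' = C_a - F` a.e. on `(0,1)`. -/
def IsSol (f a u : ℝ → ℝ) : Prop :=
  ContinuousOn u (Icc 0 1) ∧ u 0 = 0 ∧ u 1 = 0 ∧
  ∀ᵐ x ∂(volume.restrict (Ioo (0 : ℝ) 1)),
    DifferentiableAt ℝ u x ∧ a x * deriv u x = Cconst f a - Fprim f x

open scoped ENNReal
open Topology

namespace OneDim

lemma integrableOn_Icc {f : ℝ → ℝ} (hf : IntegrableOn f (Ioo (0:ℝ) 1)) :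
    IntegrableOn f (Icc (0:ℝ) 1) := by
  rwa [integrableOn_Icc_iff_integrableOn_Ioo]

lemma intervalIntegrable_of {f : ℝ → ℝ} (hf : IntegrableOn f (Ioo (0:ℝ) 1)) {z y : ℝ}
    (hz : z ∈ Icc (0:ℝ) 1) (hy : y ∈ Icc (0:ℝ) 1) : IntervalIntegrable f volume z y := by
  rw [intervalIntegrable_iff]
  refine (integrableOn_Icc hf).mono_set ?_
  exact (uIoc_subset_uIcc).trans (uIcc_subset_Icc hz hy)

lemma Fprim_continuousOn {f : ℝ → ℝ} (hf : IntegrableOn f (Ioo (0:ℝ) 1)) :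
    ContinuousOn (Fprim f) (Icc (0:ℝ) 1) := by
  have := intervalIntegral.continuousOn_primitive_interval (a := (0:ℝ)) (b := 1) (μ := volume)
    (f := f) ?_
  · rwa [uIcc_of_le (by norm_num : (0:ℝ) ≤ 1)] at this
  · rw [uIcc_of_le (by norm_num : (0:ℝ) ≤ 1)]
    exact integrableOn_Icc hf

lemma Fprim_bound {f : ℝ → ℝ} (hf : IntegrableOn f (Ioo (0:ℝ) 1)) :
    ∃ M : ℝ, 0 ≤ M ∧ ∀ x ∈ Icc (0:ℝ) 1, |Fprim f x| ≤ M := by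
  obtain ⟨M, hM⟩ := isCompact_Icc.exists_bound_of_continuousOn (Fprim_continuousOn hf)
  exact ⟨M, le_trans (abs_nonneg _) (by simpa using hM 0 (by norm_num)), fun x hx => hM x hx⟩

lemma levelset_null {f : ℝ → ℝ} (hf : IntegrableOn f (Ioo (0:ℝ) 1))
    (hfne : ∀ᵐ x ∂(volume.restrict (Ioo (0 : ℝ) 1)), f x ≠ 0) (c : ℝ) :
    volume {x ∈ Ioo (0:ℝ) 1 | Fprim f x = c} = 0 := by
  set E : Set ℝ := {x ∈ Ioo (0:ℝ) 1 | Fprim f x = c} with hE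
  have hEsub : E ⊆ Ioo (0:ℝ) 1 := fun x hx => hx.1
  have hEm : MeasurableSet E := by
    have hop : IsOpen (Ioo (0:ℝ) 1 ∩ (Fprim f) ⁻¹' ({c}ᶜ)) :=
      ((Fprim_continuousOn hf).mono Ioo_subset_Icc_self).isOpen_inter_preimage isOpen_Ioo
        (isOpen_compl_singleton)
    have : E = Ioo (0:ℝ) 1 \ (Ioo (0:ℝ) 1 ∩ (Fprim f) ⁻¹' ({c}ᶜ)) := by
      ext x
      simp only [hE, mem_sep_iff, mem_diff, mem_inter_iff, mem_preimage, mem_compl_iff,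
        mem_singleton_iff]
      tauto
    rw [this]
    exact measurableSet_Ioo.diff hop.measurableSet
  by_contra hE0
  set f₀ : ℝ → ℝ := (Ioo (0:ℝ) 1).indicator f with hf₀def
  have hf₀ : Integrable f₀ := (integrable_indicator_iff measurableSet_Ioo).2 hf
  have hleb : ∀ᵐ x ∂(volume : Measure ℝ),
      Tendsto (fun r => ⨍ y in Metric.closedBall x r, ‖f₀ y - f₀ x‖) (nhdsWithin 0 (Ioi 0))
        (nhds 0) := by
    filter_upwards [(Besicovitch.vitaliFamily (volume : Measure ℝ)).ae_tendsto_average_norm_sub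
      hf₀.locallyIntegrable] with x hx
    exact hx.comp (Besicovitch.tendsto_filterAt volume x)
  have hdens := Besicovitch.ae_tendsto_measure_inter_div (volume : Measure ℝ) E
  have hne : (ae (volume.restrict E)).NeBot := ae_neBot.2 (by
    rw [Ne, Measure.restrict_eq_zero]; exact hE0)
  obtain ⟨x, ⟨hxleb, hxdens⟩, hxf, hxE⟩ :=
    (((ae_restrict_of_ae hleb).and hdens).and
      ((ae_restrict_of_ae_restrict_of_subset hEsub hfne).and (ae_restrict_mem hEm))).exists
  obtain ⟨hxI, hxF⟩ : x ∈ Ioo (0:ℝ) 1 ∧ Fprim f x = c := hxE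
  -- main claim
  have key : ∀ ε : ℝ, 0 < ε → |f x| ≤ 2 * ε := by
    intro ε hε
    -- radius control for averages
    obtain ⟨r₁, hr₁, hr₁P⟩ : ∃ r₁ > 0, ∀ s ∈ Ioc (0:ℝ) r₁,
        (∫ y in Metric.closedBall x s, ‖f₀ y - f₀ x‖) ≤ ε * (2 * s) := by
      have := hxleb.eventually_lt_const hε
      rw [eventually_iff, mem_nhdsGT_iff_exists_Ioc_subset] at this
      obtain ⟨u, hu, huP⟩ := this
      refine ⟨u, hu, fun s hs => ?_⟩
      have havg := huP hs
      simp only [mem_setOf_eq] at havg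
      have hmeas : volume (Metric.closedBall x s) = ENNReal.ofReal (2 * s) :=
        Real.volume_closedBall x s
      have hint : (∫ y in Metric.closedBall x s, ‖f₀ y - f₀ x‖)
          = (2 * s) * ⨍ y in Metric.closedBall x s, ‖f₀ y - f₀ x‖ := by
        have h2s : (0:ℝ) < 2 * s := by linarith [hs.1]
        rw [setAverage_eq, measureReal_def, hmeas, ENNReal.toReal_ofReal h2s.le, smul_eq_mul,
          ← mul_assoc, mul_inv_cancel₀ (ne_of_gt h2s), one_mul]
      rw [hint]
      calc (2 * s) * ⨍ y in Metric.closedBall x s, ‖f₀ y - f₀ x‖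
          ≤ (2 * s) * ε := by
            apply mul_le_mul_of_nonneg_left havg.le (by linarith [hs.1])
        _ = ε * (2 * s) := by ring
    -- choose a good radius r
    have hev : ∀ᶠ r in nhdsWithin (0:ℝ) (Ioi 0),
        (1/2 : ℝ≥0∞) < volume (E ∩ Metric.closedBall x r) / volume (Metric.closedBall x r)
        ∧ r ≤ r₁ ∧ Metric.closedBall x r ⊆ Ioo (0:ℝ) 1 := by
      have h1 := hxdens.eventually_const_lt (by norm_num : (1/2 : ℝ≥0∞) < 1)
      have h2 : ∀ᶠ r in nhdsWithin (0:ℝ) (Ioi 0), r ≤ r₁ ∧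
          Metric.closedBall x r ⊆ Ioo (0:ℝ) 1 := by
        apply eventually_nhdsWithin_of_eventually_nhds
        have hlt : (0:ℝ) < min r₁ (min x (1 - x)) := by
          rcases hxI with ⟨h01, h02⟩
          simp only [lt_min_iff]
          exact ⟨hr₁, h01, by linarith⟩
        filter_upwards [eventually_lt_nhds hlt] with r hr
        constructor
        · exact hr.le.trans (min_le_left _ _)
        · intro t ht
          rw [Metric.mem_closedBall, Real.dist_eq, abs_le] at ht
          have hrx : r < x := lt_of_lt_of_le hr (le_trans (min_le_right _ _) (min_le_left _ _))
          have hrx1 : r < 1 - x := lt_of_lt_of_le hr (le_trans (min_le_right _ _) (min_le_right _ _))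
          constructor <;> [linarith [ht.1]; linarith [ht.2]]
      filter_upwards [h1, h2] with r hr1 hr2 using ⟨hr1, hr2⟩
    obtain ⟨r, ⟨hratio, hrr₁, hrsub⟩, hr0⟩ : ∃ r, ((1/2 : ℝ≥0∞) <
        volume (E ∩ Metric.closedBall x r) / volume (Metric.closedBall x r)
        ∧ r ≤ r₁ ∧ Metric.closedBall x r ⊆ Ioo (0:ℝ) 1) ∧ 0 < r := by
      obtain ⟨r, hr, hr'⟩ := (hev.and (eventually_mem_nhdsWithin)).exists
      exact ⟨r, hr, hr'⟩
    have hvolcB : volume (Metric.closedBall x r) = ENNReal.ofReal (2 * r) :=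
      Real.volume_closedBall x r
    have hhalf : ∀ S : Set ℝ, E ∩ Metric.closedBall x r ⊆ S →
        volume S ≤ ENNReal.ofReal r → False := by
      intro S hsub hvol
      have hle : volume (E ∩ Metric.closedBall x r) / volume (Metric.closedBall x r)
          ≤ 1/2 := by
        apply ENNReal.div_le_of_le_mul
        calc volume (E ∩ Metric.closedBall x r) ≤ volume S := measure_mono hsub
          _ ≤ ENNReal.ofReal r := hvol
          _ = 1/2 * volume (Metric.closedBall x r) := by
              rw [hvolcB, ENNReal.ofReal_mul (by norm_num : (0:ℝ) ≤ 2), one_div, ← mul_assoc,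
                show (ENNReal.ofReal 2) = 2 by simp,
                ENNReal.inv_mul_cancel two_ne_zero ENNReal.ofNat_ne_top, one_mul]
      exact absurd hratio (not_lt.2 hle)
    have hright : (E ∩ Ioc x (x + r)).Nonempty := by
      by_contra hemp
      rw [not_nonempty_iff_eq_empty] at hemp
      refine hhalf (Icc (x - r) x) ?_ ?_
      · rintro t ⟨htE, htB⟩
        rw [Metric.mem_closedBall, Real.dist_eq, abs_le] at htB
        rcases le_or_gt t x with h | h
        · exact ⟨by linarith [htB.1], h⟩
        · exact absurd (mem_inter htE (show t ∈ Ioc x (x+r) from ⟨h, by linarith [htB.2]⟩)) (by rw [hemp]; exact notMem_empty t)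
      · rw [Real.volume_Icc]
        apply le_of_eq
        congr 1
        ring
    have hleft : (E ∩ Ico (x - r) x).Nonempty := by
      by_contra hemp
      rw [not_nonempty_iff_eq_empty] at hemp
      refine hhalf (Icc x (x + r)) ?_ ?_
      · rintro t ⟨htE, htB⟩
        rw [Metric.mem_closedBall, Real.dist_eq, abs_le] at htB
        rcases lt_or_ge t x with h | h
        · exact absurd (mem_inter htE (show t ∈ Ico (x-r) x from ⟨by linarith [htB.1], h⟩))
            (by rw [hemp]; exact notMem_empty t)
        · exact ⟨h, by linarith [htB.2]⟩
      · rw [Real.volume_Icc]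
        apply le_of_eq
        congr 1
        ring
    obtain ⟨y, hyE, hyx, hyr⟩ : ∃ y, y ∈ E ∧ x < y ∧ y ≤ x + r := by
      obtain ⟨y, hy1, hy2⟩ := hright
      exact ⟨y, hy1, hy2.1, hy2.2⟩
    obtain ⟨z, hzE, hzr, hzx⟩ : ∃ z, z ∈ E ∧ x - r ≤ z ∧ z < x := by
      obtain ⟨z, hz1, hz2⟩ := hleft
      exact ⟨z, hz1, hz2.1, hz2.2⟩
    obtain ⟨hyI, hyF⟩ : y ∈ Ioo (0:ℝ) 1 ∧ Fprim f y = c := hyE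
    obtain ⟨hzI, hzF⟩ : z ∈ Ioo (0:ℝ) 1 ∧ Fprim f z = c := hzE
    set s := max (y - x) (x - z) with hsdef
    have hs0 : 0 < s := lt_max_of_lt_left (by linarith)
    have hsr : s ≤ r := max_le (by linarith) (by linarith)
    have hsyz : s ≤ y - z := max_le (by linarith) (by linarith)
    have hzy : z < y := lt_trans hzx hyx
    have hint0 : ∫ t in z..y, f t = 0 := by
      have h1 : IntervalIntegrable f volume 0 y :=
        intervalIntegrable_of hf (by norm_num) (Ioo_subset_Icc_self hyI)
      have h2 : IntervalIntegrable f volume 0 z :=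
        intervalIntegrable_of hf (by norm_num) (Ioo_subset_Icc_self hzI)
      rw [← intervalIntegral.integral_interval_sub_left h1 h2]
      show Fprim f y - Fprim f z = 0
      rw [hyF, hzF, sub_self]
    have hsubIoo : Ioc z y ⊆ Ioo (0:ℝ) 1 := fun t ht =>
      ⟨lt_trans hzI.1 ht.1, lt_of_le_of_lt ht.2 hyI.2⟩
    have hint0' : ∫ t in Ioc z y, f₀ t = 0 := by
      rw [← hint0, intervalIntegral.integral_of_le hzy.le]
      exact setIntegral_congr_fun measurableSet_Ioc
        (fun t ht => indicator_of_mem (hsubIoo ht) f)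
    have hfin : volume (Ioc z y) < ⊤ := measure_Ioc_lt_top
    have hconst : ∫ _t in Ioc z y, f₀ x = (y - z) * f₀ x := by
      rw [setIntegral_const, measureReal_def, Real.volume_Ioc, ENNReal.toReal_ofReal (by linarith), smul_eq_mul]
    have hIoc_sub : Ioc z y ⊆ Metric.closedBall x s := by
      intro t ht
      rw [Metric.mem_closedBall, Real.dist_eq, abs_le]
      have h1 : x - z ≤ s := le_max_right _ _
      have h2 : y - x ≤ s := le_max_left _ _
      exact ⟨by linarith [ht.1], by linarith [ht.2]⟩
    have hnorm_int : IntegrableOn (fun t => ‖f₀ t - f₀ x‖) (Metric.closedBall x s) :=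
      (hf₀.integrableOn.sub (integrableOn_const measure_closedBall_lt_top.ne)).norm
    have hest : |f₀ x| * (y - z) ≤ ε * (2 * s) := by
      have h1 : (y - z) * f₀ x = ∫ t in Ioc z y, (f₀ x - f₀ t) := by
        have hc : IntegrableOn (fun _ => f₀ x) (Ioc z y) := integrableOn_const hfin.ne
        rw [integral_sub hc hf₀.restrict, hint0',
          sub_zero, hconst]
      calc |f₀ x| * (y - z) = |(y - z) * f₀ x| := by
            rw [abs_mul, abs_of_nonneg (by linarith : (0:ℝ) ≤ y - z), mul_comm]
        _ = |∫ t in Ioc z y, (f₀ x - f₀ t)| := by rw [h1]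
        _ ≤ ∫ t in Ioc z y, ‖f₀ x - f₀ t‖ := by
            rw [← Real.norm_eq_abs]
            exact norm_integral_le_integral_norm _
        _ = ∫ t in Ioc z y, ‖f₀ t - f₀ x‖ := by
            congr 1
            ext t
            rw [norm_sub_rev]
        _ ≤ ∫ t in Metric.closedBall x s, ‖f₀ t - f₀ x‖ := by
            apply setIntegral_mono_set hnorm_int
            · exact Eventually.of_forall (fun t => norm_nonneg _)
            · exact HasSubset.Subset.eventuallyLE hIoc_sub
        _ ≤ ε * (2 * s) := hr₁P s ⟨hs0, hsr.trans hrr₁⟩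
    have hf₀x : f₀ x = f x := indicator_of_mem hxI f
    rw [hf₀x] at hest
    nlinarith [hest, hsyz, abs_nonneg (f x), hε, hzy]
  have habs : 0 < |f x| := abs_pos.2 hxf
  have := key (|f x| / 4) (by linarith)
  linarith

lemma finrestrict : IsFiniteMeasure (volume.restrict (Ioo (0:ℝ) 1)) :=
  ⟨by rw [Measure.restrict_apply_univ, Real.volume_Ioo]; norm_num⟩

lemma volIoo : (volume.restrict (Ioo (0:ℝ) 1)) univ = 1 := by
  rw [Measure.restrict_apply_univ, Real.volume_Ioo]; norm_num

lemma bounded_integrable {g : ℝ → ℝ}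
    (hm : AEStronglyMeasurable g (volume.restrict (Ioo (0:ℝ) 1)))
    {B : ℝ} (hb : ∀ᵐ x ∂(volume.restrict (Ioo (0:ℝ) 1)), |g x| ≤ B) :
    IntegrableOn g (Ioo (0:ℝ) 1) := by
  haveI := finrestrict
  exact Integrable.mono' (integrable_const B) hm
    (by filter_upwards [hb] with x h using by rwa [Real.norm_eq_abs])

section Adm

variable {lam Lam : ℝ} (hlam : 0 < lam) (hlamLam : lam ≤ Lam) {a : ℝ → ℝ}
  (ha : MemAdm lam Lam a) {f : ℝ → ℝ} (hf : IntegrableOn f (Ioo (0:ℝ) 1))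

include hlam ha

lemma inv_int : IntegrableOn (fun x => 1 / a x) (Ioo (0:ℝ) 1) := by
  apply bounded_integrable (measurable_const.div ha.1).aestronglyMeasurable (B := 1/lam)
  filter_upwards [ha.2] with x hx
  have hax : 0 < a x := lt_of_lt_of_le hlam hx.1
  simp only [Pi.div_apply]
  rw [abs_of_nonneg (by positivity : (0:ℝ) ≤ 1 / a x)]
  exact one_div_le_one_div_of_le hlam hx.1

lemma int_inv_lb (hLam : 0 < Lam) : (1:ℝ)/Lam ≤ ∫ x in Ioo (0:ℝ) 1, 1 / a x := by
  haveI := finrestrict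
  have h0 : ∫ _x in Ioo (0:ℝ) 1, (1/Lam : ℝ) = 1/Lam := by
    rw [setIntegral_const, measureReal_def, Real.volume_Ioo]
    norm_num
  rw [← h0]
  apply integral_mono_ae (integrable_const _) (inv_int hlam ha)
  filter_upwards [ha.2] with x hx
  exact one_div_le_one_div_of_le (lt_of_lt_of_le hlam hx.1) hx.2

include hf

lemma Fdiv_int : IntegrableOn (fun x => Fprim f x / a x) (Ioo (0:ℝ) 1) := by
  obtain ⟨M, hM0, hM⟩ := Fprim_bound hf
  have hFm : AEStronglyMeasurable (Fprim f) (volume.restrict (Ioo (0:ℝ) 1)) :=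
    ((Fprim_continuousOn hf).mono Ioo_subset_Icc_self).aestronglyMeasurable measurableSet_Ioo
  apply bounded_integrable ((hFm.aemeasurable.div ha.1.aemeasurable).aestronglyMeasurable) (B := M / lam)
  filter_upwards [ha.2, ae_restrict_mem measurableSet_Ioo] with x hx hxI
  simp only [Pi.div_apply]
  rw [abs_div]
  apply div_le_div₀ hM0 (hM x (Ioo_subset_Icc_self hxI)) hlam
  rw [abs_of_nonneg (by linarith [hx.1] : (0:ℝ) ≤ a x)]
  exact hx.1

lemma Tdiv_int : IntegrableOn (fun x => (Cconst f a - Fprim f x) / a x) (Ioo (0:ℝ) 1) := by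
  have h1 : (fun x => (Cconst f a - Fprim f x) / a x)
      = fun x => Cconst f a * (1 / a x) - Fprim f x / a x := by
    funext x
    rw [sub_div, mul_one_div]
  rw [h1]
  exact ((inv_int hlam ha).const_mul _).sub (Fdiv_int hlam ha hf)

lemma int_T_div (hLam : 0 < Lam) : ∫ x in Ioo (0:ℝ) 1, (Cconst f a - Fprim f x) / a x = 0 := by
  have hI : (1:ℝ)/Lam ≤ ∫ x in Ioo (0:ℝ) 1, 1 / a x := int_inv_lb hlam ha hLam
  have hI0 : (∫ x in Ioo (0:ℝ) 1, 1 / a x) ≠ 0 := ne_of_gt (lt_of_lt_of_le (by positivity) hI)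
  have h1 : (fun x => (Cconst f a - Fprim f x) / a x)
      = fun x => Cconst f a * (1 / a x) - Fprim f x / a x := by
    funext x
    rw [sub_div, mul_one_div]
  rw [h1, integral_sub (((inv_int hlam ha)).const_mul _) (Fdiv_int hlam ha hf),
    integral_const_mul, Cconst]
  field_simp
  ring

lemma T_ne_ae (hfne : ∀ᵐ x ∂(volume.restrict (Ioo (0 : ℝ) 1)), f x ≠ 0) :
    ∀ᵐ x ∂(volume.restrict (Ioo (0 : ℝ) 1)), Cconst f a - Fprim f x ≠ 0 := by
  have hN := levelset_null hf hfne (Cconst f a)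
  have h1 : (volume.restrict (Ioo (0:ℝ) 1)) {x ∈ Ioo (0:ℝ) 1 | Fprim f x = Cconst f a} = 0 := by
    apply le_antisymm _ (by simp)
    calc (volume.restrict (Ioo (0:ℝ) 1)) {x ∈ Ioo (0:ℝ) 1 | Fprim f x = Cconst f a}
        ≤ volume {x ∈ Ioo (0:ℝ) 1 | Fprim f x = Cconst f a} :=
          Measure.restrict_le_self _
      _ = 0 := hN
  have h2 : ∀ᵐ x ∂(volume.restrict (Ioo (0:ℝ) 1)),
      x ∉ {x ∈ Ioo (0:ℝ) 1 | Fprim f x = Cconst f a} := by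
    rw [ae_iff]
    refine measure_mono_null (fun x hx => ?_) h1
    have := not_not.1 hx
    exact this
  filter_upwards [h2, ae_restrict_mem measurableSet_Ioo] with x hx hxI
  intro h0
  exact hx ⟨hxI, by linarith⟩

lemma T_sign (hLam : 0 < Lam) (hfne : ∀ᵐ x ∂(volume.restrict (Ioo (0 : ℝ) 1)), f x ≠ 0) :
    (∃ x ∈ Ioo (0:ℝ) 1, 0 < Cconst f a - Fprim f x) ∧
    (∃ x ∈ Ioo (0:ℝ) 1, Cconst f a - Fprim f x < 0) := by
  haveI := finrestrict
  have hne : (ae (volume.restrict (Ioo (0:ℝ) 1))).NeBot := ae_neBot.2 (by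
    intro h
    have := volIoo
    rw [h] at this
    simp at this)
  have hTne := T_ne_ae hlam ha hf hfne
  have hint := int_T_div hlam ha hf hLam
  have haem := ae_restrict_mem (μ := volume) measurableSet_Ioo (s := Ioo (0:ℝ) 1)
  constructor
  · by_contra hc
    push_neg at hc
    have hnn : 0 ≤ᵐ[volume.restrict (Ioo (0:ℝ) 1)]
        fun x => -((Cconst f a - Fprim f x) / a x) := by
      filter_upwards [ha.2, haem] with x hx hxI
      have hax : 0 < a x := lt_of_lt_of_le hlam hx.1
      have := hc x hxI
      simp only [Pi.zero_apply, neg_nonneg]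
      exact div_nonpos_of_nonpos_of_nonneg this hax.le
    have hz : ∫ x in Ioo (0:ℝ) 1, -((Cconst f a - Fprim f x) / a x) = 0 := by
      rw [integral_neg, hint, neg_zero]
    have := (integral_eq_zero_iff_of_nonneg_ae hnn (Tdiv_int hlam ha hf).neg).1 hz
    rw [Filter.EventuallyEq] at this
    obtain ⟨x, ⟨hx1, hx2⟩, hx3⟩ := ((this.and hTne).and ha.2).exists
    have hax : 0 < a x := lt_of_lt_of_le hlam hx3.1
    simp only [Pi.zero_apply, neg_eq_zero, div_eq_zero_iff] at hx1
    rcases hx1 with h | h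
    · exact hx2 h
    · exact absurd h (ne_of_gt hax)
  · by_contra hc
    push_neg at hc
    have hnn : 0 ≤ᵐ[volume.restrict (Ioo (0:ℝ) 1)]
        fun x => (Cconst f a - Fprim f x) / a x := by
      filter_upwards [ha.2, haem] with x hx hxI
      have hax : 0 < a x := lt_of_lt_of_le hlam hx.1
      exact div_nonneg (hc x hxI) hax.le
    have := (integral_eq_zero_iff_of_nonneg_ae hnn (Tdiv_int hlam ha hf)).1 hint
    rw [Filter.EventuallyEq] at this
    obtain ⟨x, ⟨hx1, hx2⟩, hx3⟩ := ((this.and hTne).and ha.2).exists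
    have hax : 0 < a x := lt_of_lt_of_le hlam hx3.1
    simp only [Pi.zero_apply, div_eq_zero_iff] at hx1
    rcases hx1 with h | h
    · exact hx2 h
    · exact absurd h (ne_of_gt hax)

end Adm

lemma exists_ball_in {T : ℝ → ℝ} (hT : ContinuousOn T (Icc (0:ℝ) 1)) {x₁ x₂ : ℝ}
    (h₁ : x₁ ∈ Ioo (0:ℝ) 1) (h₂ : x₂ ∈ Ioo (0:ℝ) 1) {A B v : ℝ}
    (hvA : A < v) (hvB : v < B) (hv : v ∈ uIcc (T x₁) (T x₂)) :
    ∃ y r, 0 < r ∧ Metric.ball y r ⊆ Ioo (0:ℝ) 1 ∧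
      ∀ t ∈ Metric.ball y r, A < T t ∧ T t < B := by
  have hsub : uIcc x₁ x₂ ⊆ Ioo (0:ℝ) 1 := by
    rw [uIcc_eq_union]
    rintro t (ht | ht)
    · exact ⟨lt_of_lt_of_le h₁.1 ht.1, lt_of_le_of_lt ht.2 h₂.2⟩
    · exact ⟨lt_of_lt_of_le h₂.1 ht.1, lt_of_le_of_lt ht.2 h₁.2⟩
  have hT' : ContinuousOn T (uIcc x₁ x₂) :=
    hT.mono (hsub.trans Ioo_subset_Icc_self)
  obtain ⟨y, hy, hTy⟩ := intermediate_value_uIcc hT' hv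
  have hyI : y ∈ Ioo (0:ℝ) 1 := hsub hy
  have hcy : ContinuousAt T y :=
    hT.continuousAt (Icc_mem_nhds hyI.1 hyI.2)
  have hU : Ioo (0:ℝ) 1 ∩ T ⁻¹' (Ioo A B) ∈ nhds y := by
    apply inter_mem (isOpen_Ioo.mem_nhds hyI)
    apply hcy.preimage_mem_nhds
    apply isOpen_Ioo.mem_nhds
    rw [hTy]
    exact ⟨hvA, hvB⟩
  obtain ⟨r, hr0, hrsub⟩ := Metric.mem_nhds_iff.1 hU
  exact ⟨y, r, hr0, fun t ht => (hrsub ht).1, fun t ht => (hrsub ht).2⟩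

end OneDim

set_option maxHeartbeats 1000000 in
/-- One-dimensional continuity: if `f ≠ 0` a.e. and the solutions converge in `H¹₀`,
then the coefficients converge in every `L^p`, `1 ≤ p < ∞`. -/
theorem one_dimensional_Lp_continuity (lam Lam : ℝ) (hlam : 0 < lam) (hlamLam : lam ≤ Lam)
    (f : ℝ → ℝ) (hf : IntegrableOn f (Ioo (0 : ℝ) 1))
    (hfne : ∀ᵐ x ∂(volume.restrict (Ioo (0 : ℝ) 1)), f x ≠ 0)
    (a : ℝ → ℝ) (ha : MemAdm lam Lam a)
    (aseq : ℕ → ℝ → ℝ) (haseq : ∀ n, MemAdm lam Lam (aseq n))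
    (ua : ℝ → ℝ) (hua : IsSol f a ua)
    (useq : ℕ → ℝ → ℝ) (huseq : ∀ n, IsSol f (aseq n) (useq n))
    (hconv : Tendsto (fun n => ∫ x in Ioo (0 : ℝ) 1, |deriv (useq n) x - deriv ua x| ^ 2)
      atTop (nhds 0)) :
    ∀ p : ℝ, 1 ≤ p →
      Tendsto (fun n => ∫ x in Ioo (0 : ℝ) 1, |aseq n x - a x| ^ p) atTop (nhds 0) := by
  intro p hp
  have hLam : 0 < Lam := lt_of_lt_of_le hlam hlamLam
  haveI := OneDim.finrestrict
  obtain ⟨M, hM0, hM⟩ := OneDim.Fprim_bound hf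
  have hTcont : ContinuousOn (fun x => Cconst f a - Fprim f x) (Icc (0:ℝ) 1) :=
    continuousOn_const.sub (OneDim.Fprim_continuousOn hf)
  -- a.e. facts
  have haea : ∀ᵐ x ∂(volume.restrict (Ioo (0:ℝ) 1)),
      (lam ≤ a x ∧ a x ≤ Lam) ∧ a x * deriv ua x = Cconst f a - Fprim f x :=
    ha.2.and (hua.2.2.2.mono (fun x h => h.2))
  have haen : ∀ n, ∀ᵐ x ∂(volume.restrict (Ioo (0:ℝ) 1)),
      (lam ≤ aseq n x ∧ aseq n x ≤ Lam) ∧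
        aseq n x * deriv (useq n) x = Cconst f (aseq n) - Fprim f x :=
    fun n => (haseq n).2.and ((huseq n).2.2.2.mono (fun x h => h.2))
  -- derivative bounds
  have hua_bd : ∀ᵐ x ∂(volume.restrict (Ioo (0:ℝ) 1)),
      |deriv ua x| ≤ (|Cconst f a| + M) / lam := by
    filter_upwards [haea, ae_restrict_mem measurableSet_Ioo] with x hx hxI
    rw [le_div_iff₀ hlam]
    have h1 : |a x * deriv ua x| ≤ |Cconst f a| + M := by
      rw [hx.2]
      exact (abs_sub _ _).trans (by gcongr; exact hM x (Ioo_subset_Icc_self hxI))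
    have h2 : lam * |deriv ua x| ≤ |a x * deriv ua x| := by
      rw [abs_mul, abs_of_nonneg (by linarith [hx.1.1] : (0:ℝ) ≤ a x)]
      exact mul_le_mul_of_nonneg_right hx.1.1 (abs_nonneg _)
    linarith [mul_comm lam |deriv ua x|]
  have hun_bd : ∀ n, ∀ᵐ x ∂(volume.restrict (Ioo (0:ℝ) 1)),
      |deriv (useq n) x| ≤ (|Cconst f (aseq n)| + M) / lam := by
    intro n
    filter_upwards [haen n, ae_restrict_mem measurableSet_Ioo] with x hx hxI
    rw [le_div_iff₀ hlam]
    have h1 : |aseq n x * deriv (useq n) x| ≤ |Cconst f (aseq n)| + M := by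
      rw [hx.2]
      exact (abs_sub _ _).trans (by gcongr; exact hM x (Ioo_subset_Icc_self hxI))
    have h2 : lam * |deriv (useq n) x| ≤ |aseq n x * deriv (useq n) x| := by
      rw [abs_mul, abs_of_nonneg (by linarith [hx.1.1] : (0:ℝ) ≤ aseq n x)]
      exact mul_le_mul_of_nonneg_right hx.1.1 (abs_nonneg _)
    linarith [mul_comm lam |deriv (useq n) x|]
  -- integrability
  have hgsq_int : ∀ n, IntegrableOn
      (fun x => |deriv (useq n) x - deriv ua x| ^ 2) (Ioo (0:ℝ) 1) := by
    intro n
    apply OneDim.bounded_integrable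
      (((measurable_deriv _).sub (measurable_deriv _)).abs.pow_const 2).aestronglyMeasurable
      (B := ((|Cconst f (aseq n)| + M) / lam + (|Cconst f a| + M) / lam) ^ 2)
    filter_upwards [hua_bd, hun_bd n] with x h1 h2
    rw [abs_of_nonneg (pow_nonneg (abs_nonneg _) 2)]
    apply pow_le_pow_left₀ (abs_nonneg _)
    exact (abs_sub _ _).trans (by linarith)
  have hg_int : ∀ n, IntegrableOn
      (fun x => |deriv (useq n) x - deriv ua x|) (Ioo (0:ℝ) 1) := by
    intro n
    apply OneDim.bounded_integrable
      (((measurable_deriv _).sub (measurable_deriv _)).abs).aestronglyMeasurable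
      (B := (|Cconst f (aseq n)| + M) / lam + (|Cconst f a| + M) / lam)
    filter_upwards [hua_bd, hun_bd n] with x h1 h2
    rw [abs_abs]
    exact (abs_sub _ _).trans (by linarith)
  have ha_sub_bd : ∀ n, ∀ᵐ x ∂(volume.restrict (Ioo (0:ℝ) 1)),
      |aseq n x - a x| ≤ Lam - lam := by
    intro n
    filter_upwards [ha.2, (haseq n).2] with x h1 h2
    rw [abs_le]
    constructor <;> linarith [h1.1, h1.2, h2.1, h2.2]
  have hab_int : ∀ n, IntegrableOn (fun x => |aseq n x - a x|) (Ioo (0:ℝ) 1) := by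
    intro n
    apply OneDim.bounded_integrable (((haseq n).1.sub ha.1).abs).aestronglyMeasurable
      (B := Lam - lam)
    filter_upwards [ha_sub_bd n] with x h1
    rwa [abs_abs]
  have hga_int : ∀ n, IntegrableOn
      (fun x => |aseq n x - a x| * |deriv ua x|) (Ioo (0:ℝ) 1) := by
    intro n
    apply OneDim.bounded_integrable
      ((((haseq n).1.sub ha.1).abs.mul (measurable_deriv _).abs)).aestronglyMeasurable
      (B := (Lam - lam) * ((|Cconst f a| + M) / lam))
    filter_upwards [ha_sub_bd n, hua_bd] with x h1 h2
    rw [abs_of_nonneg (mul_nonneg (abs_nonneg _) (abs_nonneg _))]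
    exact mul_le_mul h1 h2 (abs_nonneg _) (by linarith [abs_nonneg (aseq n x - a x)])
  -- step 1 : the constants converge
  have hcn : Tendsto (fun n => Cconst f (aseq n) - Cconst f a) atTop (nhds 0) := by
    rw [Metric.tendsto_nhds]
    intro ε hε
    obtain ⟨⟨x₁, hx₁, hx₁T⟩, x₂, hx₂, hx₂T⟩ := OneDim.T_sign hlam ha hf hLam hfne
    obtain ⟨ym, rm, hrm0, hrmsub, hrmT⟩ := OneDim.exists_ball_in hTcont hx₁ hx₂
      (A := -ε) (B := 0) (v := max (-ε/2) ((Cconst f a - Fprim f x₂)/2))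
      (lt_max_of_lt_left (by linarith)) (max_lt (by linarith) (by linarith))
      (by
        rw [mem_uIcc]
        right
        constructor
        · exact le_max_of_le_right (by linarith)
        · exact max_le (by linarith) (by linarith))
    obtain ⟨yp, rp, hrp0, hrpsub, hrpT⟩ := OneDim.exists_ball_in hTcont hx₁ hx₂
      (A := 0) (B := ε) (v := min (ε/2) ((Cconst f a - Fprim f x₁)/2))
      (lt_min (by linarith) (by linarith)) (min_lt_of_left_lt (by linarith))
      (by
        rw [mem_uIcc]
        right
        have h0 : (0:ℝ) < min (ε/2) ((Cconst f a - Fprim f x₁)/2) :=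
          lt_min (by linarith) (by linarith)
        constructor
        · linarith
        · exact min_le_of_right_le (by linarith))
    set mm := (volume (Metric.ball ym rm)).toReal with hmmdef
    have hmm : 0 < mm := by
      rw [hmmdef, Real.volume_ball, ENNReal.toReal_ofReal (by linarith)]
      linarith
    set mp := (volume (Metric.ball yp rp)).toReal with hmpdef
    have hmp : 0 < mp := by
      rw [hmpdef, Real.volume_ball, ENNReal.toReal_ofReal (by linarith)]
      linarith
    have hδ : 0 < min (mm * (ε/Lam)^2) (mp * (ε/Lam)^2) :=
      lt_min (by positivity) (by positivity)
    filter_upwards [hconv.eventually_lt_const hδ] with n hn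
    rw [Real.dist_0_eq_abs]
    by_contra hcon
    push_neg at hcon
    rcases le_abs.1 hcon with hcase | hcase
    · -- Cconst f (aseq n) - Cconst f a ≥ ε : use the negative ball
      have hae : ∀ᵐ x ∂(volume.restrict (Metric.ball ym rm)),
          (ε/Lam)^2 ≤ |deriv (useq n) x - deriv ua x| ^ 2 := by
        filter_upwards [ae_restrict_of_ae_restrict_of_subset hrmsub (haen n),
          ae_restrict_of_ae_restrict_of_subset hrmsub haea,
          ae_restrict_mem Metric.isOpen_ball.measurableSet] with x h1 h2 hxB
        obtain ⟨hTb1, hTb2⟩ := hrmT x hxB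
        have hAn : 0 < aseq n x := lt_of_lt_of_le hlam h1.1.1
        have ha0 : 0 < a x := lt_of_lt_of_le hlam h2.1.1
        have hd1 : deriv (useq n) x = (Cconst f (aseq n) - Cconst f a
            + (Cconst f a - Fprim f x)) / aseq n x := by
          rw [eq_div_iff (ne_of_gt hAn)]
          linear_combination h1.2
        have hd2 : deriv ua x = (Cconst f a - Fprim f x) / a x := by
          rw [eq_div_iff (ne_of_gt ha0)]
          linear_combination h2.2
        have hnum : 0 ≤ Cconst f (aseq n) - Cconst f a + (Cconst f a - Fprim f x) := by
          linarith
        have hlow1 : (Cconst f (aseq n) - Cconst f a + (Cconst f a - Fprim f x)) / Lam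
            ≤ deriv (useq n) x := by
          rw [hd1]
          exact div_le_div_of_nonneg_left hnum hAn h1.1.2
        have hlow2 : deriv ua x ≤ (Cconst f a - Fprim f x) / Lam := by
          rw [hd2, div_le_div_iff₀ ha0 hLam]
          exact mul_le_mul_of_nonpos_left h2.1.2 (by linarith)
        have hfinal : ε / Lam ≤ deriv (useq n) x - deriv ua x := by
          have h3 : (Cconst f (aseq n) - Cconst f a + (Cconst f a - Fprim f x)) / Lam
              - (Cconst f a - Fprim f x) / Lam
              = (Cconst f (aseq n) - Cconst f a) / Lam := by
            rw [div_sub_div_same]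
            ring_nf
          have h4 : ε / Lam ≤ (Cconst f (aseq n) - Cconst f a) / Lam := by gcongr
          linarith
        have habs : ε/Lam ≤ |deriv (useq n) x - deriv ua x| :=
          hfinal.trans (le_abs_self _)
        exact pow_le_pow_left₀ (by positivity) habs 2
      haveI : IsFiniteMeasure (volume.restrict (Metric.ball ym rm)) := ⟨by
        rw [Measure.restrict_apply_univ]; exact measure_ball_lt_top⟩
      have hI1 : mm * (ε/Lam)^2
          ≤ ∫ x in Metric.ball ym rm, |deriv (useq n) x - deriv ua x| ^ 2 := by
        have := integral_mono_ae (integrable_const ((ε/Lam)^2))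
          ((hgsq_int n).mono_set hrmsub) hae
        rwa [setIntegral_const, measureReal_def, smul_eq_mul] at this
      have hI2 : (∫ x in Metric.ball ym rm, |deriv (useq n) x - deriv ua x| ^ 2)
          ≤ ∫ x in Ioo (0:ℝ) 1, |deriv (useq n) x - deriv ua x| ^ 2 :=
        setIntegral_mono_set (hgsq_int n)
          (Eventually.of_forall (fun x => pow_nonneg (abs_nonneg _) 2))
          (HasSubset.Subset.eventuallyLE hrmsub)
      have h6 := lt_of_le_of_lt (hI1.trans hI2) hn
      have h5 : min (mm * (ε/Lam)^2) (mp * (ε/Lam)^2) ≤ mm * (ε/Lam)^2 := min_le_left _ _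
      linarith
    · -- Cconst f a - Cconst f (aseq n) ≥ ε : use the positive ball
      have hae : ∀ᵐ x ∂(volume.restrict (Metric.ball yp rp)),
          (ε/Lam)^2 ≤ |deriv (useq n) x - deriv ua x| ^ 2 := by
        filter_upwards [ae_restrict_of_ae_restrict_of_subset hrpsub (haen n),
          ae_restrict_of_ae_restrict_of_subset hrpsub haea,
          ae_restrict_mem Metric.isOpen_ball.measurableSet] with x h1 h2 hxB
        obtain ⟨hTb1, hTb2⟩ := hrpT x hxB
        have hAn : 0 < aseq n x := lt_of_lt_of_le hlam h1.1.1
        have ha0 : 0 < a x := lt_of_lt_of_le hlam h2.1.1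
        have hd1 : deriv (useq n) x = (Cconst f (aseq n) - Cconst f a
            + (Cconst f a - Fprim f x)) / aseq n x := by
          rw [eq_div_iff (ne_of_gt hAn)]
          linear_combination h1.2
        have hd2 : deriv ua x = (Cconst f a - Fprim f x) / a x := by
          rw [eq_div_iff (ne_of_gt ha0)]
          linear_combination h2.2
        have hnum : Cconst f (aseq n) - Cconst f a + (Cconst f a - Fprim f x) ≤ 0 := by
          linarith
        have hup1 : deriv (useq n) x
            ≤ (Cconst f (aseq n) - Cconst f a + (Cconst f a - Fprim f x)) / Lam := by
          rw [hd1, div_le_div_iff₀ hAn hLam]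
          exact mul_le_mul_of_nonpos_left h1.1.2 hnum
        have hup2 : (Cconst f a - Fprim f x) / Lam ≤ deriv ua x := by
          rw [hd2]
          exact div_le_div_of_nonneg_left hTb1.le ha0 h2.1.2
        have hfinal : ε / Lam ≤ deriv ua x - deriv (useq n) x := by
          have h3 : (Cconst f a - Fprim f x) / Lam
              - (Cconst f (aseq n) - Cconst f a + (Cconst f a - Fprim f x)) / Lam
              = (Cconst f a - Cconst f (aseq n)) / Lam := by
            rw [div_sub_div_same]
            ring_nf
          have h4 : ε / Lam ≤ (Cconst f a - Cconst f (aseq n)) / Lam := by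
            gcongr
            linarith
          linarith
        have habs : ε/Lam ≤ |deriv (useq n) x - deriv ua x| := by
          rw [abs_sub_comm]
          exact hfinal.trans (le_abs_self _)
        exact pow_le_pow_left₀ (by positivity) habs 2
      haveI : IsFiniteMeasure (volume.restrict (Metric.ball yp rp)) := ⟨by
        rw [Measure.restrict_apply_univ]; exact measure_ball_lt_top⟩
      have hI1 : mp * (ε/Lam)^2
          ≤ ∫ x in Metric.ball yp rp, |deriv (useq n) x - deriv ua x| ^ 2 := by
        have := integral_mono_ae (integrable_const ((ε/Lam)^2))
          ((hgsq_int n).mono_set hrpsub) hae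
        rwa [setIntegral_const, measureReal_def, smul_eq_mul] at this
      have hI2 : (∫ x in Metric.ball yp rp, |deriv (useq n) x - deriv ua x| ^ 2)
          ≤ ∫ x in Ioo (0:ℝ) 1, |deriv (useq n) x - deriv ua x| ^ 2 :=
        setIntegral_mono_set (hgsq_int n)
          (Eventually.of_forall (fun x => pow_nonneg (abs_nonneg _) 2))
          (HasSubset.Subset.eventuallyLE hrpsub)
      have h6 := lt_of_le_of_lt (hI1.trans hI2) hn
      have h5 : min (mm * (ε/Lam)^2) (mp * (ε/Lam)^2) ≤ mp * (ε/Lam)^2 := min_le_right _ _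
      linarith
  -- step 2 : L¹ convergence of the derivatives
  have habs_g : Tendsto (fun n => ∫ x in Ioo (0:ℝ) 1, |deriv (useq n) x - deriv ua x|)
      atTop (nhds 0) := by
    rw [Metric.tendsto_nhds]
    intro ε hε
    filter_upwards [hconv.eventually_lt_const (show (0:ℝ) < ε^2/2 by positivity)] with n hn
    rw [Real.dist_0_eq_abs, abs_of_nonneg (integral_nonneg (fun x => abs_nonneg _))]
    have hle : (∫ x in Ioo (0:ℝ) 1, |deriv (useq n) x - deriv ua x|)
        ≤ ∫ x in Ioo (0:ℝ) 1, (ε/2 + |deriv (useq n) x - deriv ua x|^2 / ε) := by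
      apply integral_mono_ae (hg_int n)
        ((integrable_const _).add ((hgsq_int n).div_const ε))
      apply Eventually.of_forall
      intro x
      have h0 := abs_nonneg (deriv (useq n) x - deriv ua x)
      have h2 : |deriv (useq n) x - deriv ua x|
          ≤ (ε^2/2 + |deriv (useq n) x - deriv ua x|^2)/ε := by
        rw [le_div_iff₀ hε]
        nlinarith [sq_nonneg (|deriv (useq n) x - deriv ua x| - ε)]
      calc |deriv (useq n) x - deriv ua x|
          ≤ (ε^2/2 + |deriv (useq n) x - deriv ua x|^2)/ε := h2
        _ = ε/2 + |deriv (useq n) x - deriv ua x|^2 / ε := by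
            field_simp
    have heq : (∫ x in Ioo (0:ℝ) 1, (ε/2 + |deriv (useq n) x - deriv ua x|^2 / ε))
        = ε/2 + (∫ x in Ioo (0:ℝ) 1, |deriv (useq n) x - deriv ua x|^2) / ε := by
      have hconst : (∫ _x in Ioo (0:ℝ) 1, (ε/2 : ℝ)) = ε/2 := by
        rw [setIntegral_const, measureReal_def, Real.volume_Ioo, smul_eq_mul, ENNReal.toReal_ofReal (by norm_num)]
        norm_num
      rw [integral_add (integrable_const _) ((hgsq_int n).div_const ε), hconst, integral_div]
    have hlast : (∫ x in Ioo (0:ℝ) 1, |deriv (useq n) x - deriv ua x|^2) / ε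
        < (ε^2/2)/ε := (div_lt_div_iff_of_pos_right hε).2 hn
    have heps : (ε^2/2)/ε = ε/2 := by
      field_simp
    linarith
  -- step 3 : weighted L¹ convergence of the coefficients
  have hJ : Tendsto (fun n => ∫ x in Ioo (0:ℝ) 1, |aseq n x - a x| * |deriv ua x|)
      atTop (nhds 0) := by
    have htend : Tendsto (fun n => |Cconst f (aseq n) - Cconst f a|
        + Lam * ∫ x in Ioo (0:ℝ) 1, |deriv (useq n) x - deriv ua x|) atTop (nhds 0) := by
      have h1 : Tendsto (fun n => |Cconst f (aseq n) - Cconst f a|) atTop (nhds 0) := by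
        simpa using hcn.abs
      simpa using h1.add (habs_g.const_mul Lam)
    refine squeeze_zero
      (fun n => integral_nonneg (fun x => mul_nonneg (abs_nonneg _) (abs_nonneg _)))
      (fun n => ?_) htend
    have hptw : ∀ᵐ x ∂(volume.restrict (Ioo (0:ℝ) 1)),
        |aseq n x - a x| * |deriv ua x| ≤ |Cconst f (aseq n) - Cconst f a|
          + Lam * |deriv (useq n) x - deriv ua x| := by
      filter_upwards [haea, haen n] with x h2 h1
      have hid : (aseq n x - a x) * deriv ua x = (Cconst f (aseq n) - Cconst f a)
          - aseq n x * (deriv (useq n) x - deriv ua x) := by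
        linear_combination h1.2 - h2.2
      have habsan : |aseq n x| ≤ Lam := by
        rw [abs_of_nonneg (by linarith [h1.1.1] : (0:ℝ) ≤ aseq n x)]
        exact h1.1.2
      calc |aseq n x - a x| * |deriv ua x|
          = |(aseq n x - a x) * deriv ua x| := (abs_mul _ _).symm
        _ = |(Cconst f (aseq n) - Cconst f a)
            - aseq n x * (deriv (useq n) x - deriv ua x)| := by rw [hid]
        _ ≤ |Cconst f (aseq n) - Cconst f a|
            + |aseq n x * (deriv (useq n) x - deriv ua x)| := abs_sub _ _
        _ ≤ |Cconst f (aseq n) - Cconst f a|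
            + Lam * |deriv (useq n) x - deriv ua x| := by
              rw [abs_mul]
              exact add_le_add_right
                (mul_le_mul_of_nonneg_right habsan (abs_nonneg _)) _
    have := integral_mono_ae (hga_int n)
      ((integrable_const _).add ((hg_int n).const_mul Lam)) hptw
    calc (∫ x in Ioo (0:ℝ) 1, |aseq n x - a x| * |deriv ua x|)
        ≤ ∫ x in Ioo (0:ℝ) 1, (|Cconst f (aseq n) - Cconst f a|
            + Lam * |deriv (useq n) x - deriv ua x|) := this
      _ = |Cconst f (aseq n) - Cconst f a|
            + Lam * ∫ x in Ioo (0:ℝ) 1, |deriv (useq n) x - deriv ua x| := by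
          have hconst : (∫ _x in Ioo (0:ℝ) 1, |Cconst f (aseq n) - Cconst f a|)
              = |Cconst f (aseq n) - Cconst f a| := by
            rw [setIntegral_const, measureReal_def, Real.volume_Ioo, smul_eq_mul,
              ENNReal.toReal_ofReal (by norm_num)]
            norm_num
          rw [integral_add (integrable_const _) ((hg_int n).const_mul Lam), hconst,
            integral_const_mul]
  -- step 4 : L¹ convergence of the coefficients
  have hL1 : Tendsto (fun n => ∫ x in Ioo (0:ℝ) 1, |aseq n x - a x|) atTop (nhds 0) := by
    rw [Metric.tendsto_nhds]
    intro ε hε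
    have hK0 : (0:ℝ) ≤ Lam - lam := by linarith
    set S : ℕ → Set ℝ := fun k => Ioo (0:ℝ) 1 ∩
      (fun x => Cconst f a - Fprim f x) ⁻¹' (Metric.ball 0 (1/((k:ℝ)+1))) with hS
    have hSopen : ∀ k, IsOpen (S k) := fun k =>
      ContinuousOn.isOpen_inter_preimage (hTcont.mono Ioo_subset_Icc_self) isOpen_Ioo
        Metric.isOpen_ball
    have hSsub : ∀ k, S k ⊆ Ioo (0:ℝ) 1 := fun k => inter_subset_left
    have hSfin : ∀ k, volume (S k) < ⊤ := fun k =>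
      lt_of_le_of_lt (measure_mono (hSsub k)) (by rw [Real.volume_Ioo]; norm_num)
    have hAnti : Antitone S := by
      intro k l hkl
      apply inter_subset_inter_right
      apply preimage_mono
      apply Metric.ball_subset_ball
      have hcast : (k:ℝ) + 1 ≤ (l:ℝ) + 1 := by
        have : (k:ℝ) ≤ (l:ℝ) := Nat.cast_le.2 hkl
        linarith
      exact one_div_le_one_div_of_le (by positivity) hcast
    have hInter : volume (⋂ k, S k) = 0 := by
      apply measure_mono_null _ (OneDim.levelset_null hf hfne (Cconst f a))
      intro x hx
      simp only [mem_iInter] at hx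
      have hxI : x ∈ Ioo (0:ℝ) 1 := (hx 0).1
      refine ⟨hxI, ?_⟩
      by_contra hne
      have habs : 0 < |Cconst f a - Fprim f x| := by
        rw [abs_pos]
        intro h0
        exact hne (by linarith)
      obtain ⟨k, hk⟩ := exists_nat_one_div_lt habs
      have h2 := (hx k).2
      rw [mem_preimage, Metric.mem_ball, Real.dist_0_eq_abs] at h2
      linarith
    have htm : Tendsto (fun k => volume (S k)) atTop (nhds 0) := by
      have h := tendsto_measure_iInter_atTop
        (fun k => ((hSopen k).measurableSet).nullMeasurableSet) hAnti
        ⟨0, (hSfin 0).ne⟩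
      rw [hInter] at h
      exact h
    obtain ⟨k₀, hk₀⟩ := (htm.eventually_lt_const
      (show (0:ℝ≥0∞) < ENNReal.ofReal (ε/(2*((Lam - lam)+1)))
        from ENNReal.ofReal_pos.2 (by positivity))).exists
    have hδ : 0 < 1/((k₀:ℝ)+1) := by positivity
    set δ := 1/((k₀:ℝ)+1) with hδdef
    filter_upwards [(Metric.tendsto_nhds.1 hJ) ((ε/2) * (δ/Lam)) (by positivity)] with n hn
    rw [Real.dist_0_eq_abs,
      abs_of_nonneg (integral_nonneg (fun x =>
        mul_nonneg (abs_nonneg (aseq n x - a x)) (abs_nonneg (deriv ua x))))] at hn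
    rw [Real.dist_0_eq_abs,
      abs_of_nonneg (integral_nonneg (fun x => abs_nonneg (aseq n x - a x)))]
    have hsplit : (∫ x in Ioo (0:ℝ) 1, |aseq n x - a x|)
        = (∫ x in S k₀, |aseq n x - a x|)
          + ∫ x in Ioo (0:ℝ) 1 \ S k₀, |aseq n x - a x| := by
      rw [← setIntegral_union disjoint_sdiff_self_right
        (measurableSet_Ioo.diff (hSopen k₀).measurableSet)
        ((hab_int n).mono_set (hSsub k₀)) ((hab_int n).mono_set diff_subset),
        union_diff_cancel (hSsub k₀)]
    have hvol : (volume (S k₀)).toReal < ε/(2*((Lam - lam)+1)) :=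
      (ENNReal.lt_ofReal_iff_toReal_lt (hSfin k₀).ne).1 hk₀
    haveI : IsFiniteMeasure (volume.restrict (S k₀)) := ⟨by
      rw [Measure.restrict_apply_univ]; exact hSfin k₀⟩
    have hb1 : (∫ x in S k₀, |aseq n x - a x|) ≤ (volume (S k₀)).toReal * (Lam - lam) := by
      have h := integral_mono_ae ((hab_int n).mono_set (hSsub k₀)) (integrable_const (Lam - lam))
        (ae_restrict_of_ae_restrict_of_subset (hSsub k₀) (ha_sub_bd n))
      rwa [setIntegral_const, measureReal_def, smul_eq_mul] at h
    have hb1' : (∫ x in S k₀, |aseq n x - a x|) < ε/2 := by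
      have h2 : (volume (S k₀)).toReal * (Lam - lam)
          ≤ (ε/(2*((Lam - lam)+1))) * (Lam - lam) :=
        mul_le_mul_of_nonneg_right hvol.le hK0
      have h3 : (ε/(2*((Lam - lam)+1))) * (Lam - lam) < ε/2 := by
        rw [div_mul_eq_mul_div, div_lt_div_iff₀ (by positivity) (by norm_num)]
        nlinarith
      linarith
    have hb2 : (∫ x in Ioo (0:ℝ) 1 \ S k₀, |aseq n x - a x|)
        ≤ (Lam/δ) * ∫ x in Ioo (0:ℝ) 1 \ S k₀, |aseq n x - a x| * |deriv ua x| := by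
      rw [← integral_const_mul]
      apply integral_mono_ae ((hab_int n).mono_set diff_subset)
        (((hga_int n).mono_set diff_subset).const_mul _)
      filter_upwards [ae_restrict_of_ae_restrict_of_subset diff_subset haea,
        ae_restrict_mem (measurableSet_Ioo.diff (hSopen k₀).measurableSet)] with x h2 hxD
      have hxI : x ∈ Ioo (0:ℝ) 1 := hxD.1
      have hxT : δ ≤ |Cconst f a - Fprim f x| := by
        by_contra hlt
        push_neg at hlt
        exact hxD.2 ⟨hxI, by rw [mem_preimage, Metric.mem_ball, Real.dist_0_eq_abs]; exact hlt⟩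
      have ha0 : 0 < a x := lt_of_lt_of_le hlam h2.1.1
      have hTd : |Cconst f a - Fprim f x| ≤ Lam * |deriv ua x| := by
        rw [← h2.2, abs_mul]
        apply mul_le_mul_of_nonneg_right _ (abs_nonneg _)
        rw [abs_of_nonneg ha0.le]
        exact h2.1.2
      rw [div_mul_eq_mul_div, le_div_iff₀ hδ]
      nlinarith [mul_le_mul_of_nonneg_left (hxT.trans hTd) (abs_nonneg (aseq n x - a x))]
    have hb2' : (Lam/δ) * (∫ x in Ioo (0:ℝ) 1 \ S k₀, |aseq n x - a x| * |deriv ua x|)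
        < ε/2 := by
      have hJle : (∫ x in Ioo (0:ℝ) 1 \ S k₀, |aseq n x - a x| * |deriv ua x|)
          ≤ ∫ x in Ioo (0:ℝ) 1, |aseq n x - a x| * |deriv ua x| :=
        setIntegral_mono_set (hga_int n)
          (Eventually.of_forall (fun x => mul_nonneg (abs_nonneg _) (abs_nonneg _)))
          (HasSubset.Subset.eventuallyLE diff_subset)
      have hpos : (0:ℝ) < Lam/δ := by positivity
      have h4 : (Lam/δ) * (∫ x in Ioo (0:ℝ) 1 \ S k₀, |aseq n x - a x| * |deriv ua x|)
          ≤ (Lam/δ) * ∫ x in Ioo (0:ℝ) 1, |aseq n x - a x| * |deriv ua x| :=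
        mul_le_mul_of_nonneg_left hJle hpos.le
      have h5 : (Lam/δ) * (∫ x in Ioo (0:ℝ) 1, |aseq n x - a x| * |deriv ua x|)
          < (Lam/δ) * ((ε/2) * (δ/Lam)) := by
        exact mul_lt_mul_of_pos_left hn hpos
      have h6 : (Lam/δ) * ((ε/2) * (δ/Lam)) = ε/2 := by
        field_simp
      linarith
    calc (∫ x in Ioo (0:ℝ) 1, |aseq n x - a x|)
        = (∫ x in S k₀, |aseq n x - a x|)
          + ∫ x in Ioo (0:ℝ) 1 \ S k₀, |aseq n x - a x| := hsplit
      _ < ε/2 + ε/2 := add_lt_add_of_lt_of_le hb1' (le_of_lt (lt_of_le_of_lt hb2 hb2'))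
      _ = ε := by ring
  -- step 5 : L^p convergence
  have hK0 : (0:ℝ) ≤ Lam - lam := by linarith
  have hptw : ∀ n, ∀ᵐ x ∂(volume.restrict (Ioo (0:ℝ) 1)),
      |aseq n x - a x| ^ p ≤ (Lam - lam) ^ (p - 1) * |aseq n x - a x| := by
    intro n
    filter_upwards [ha_sub_bd n] with x hx
    rcases eq_or_lt_of_le (abs_nonneg (aseq n x - a x)) with h0 | h0
    · rw [← h0, Real.zero_rpow (by linarith : p ≠ 0), mul_zero]
    · have h1 : |aseq n x - a x| ^ p
          = |aseq n x - a x| ^ (p - 1) * |aseq n x - a x| := by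
        have h2 := Real.rpow_add h0 (p - 1) 1
        rw [show p - 1 + 1 = p by ring, Real.rpow_one] at h2
        exact h2
      rw [h1]
      exact mul_le_mul_of_nonneg_right
        (Real.rpow_le_rpow h0.le hx (by linarith)) (abs_nonneg _)
  have hint_p : ∀ n, IntegrableOn (fun x => |aseq n x - a x| ^ p) (Ioo (0:ℝ) 1) := by
    intro n
    apply OneDim.bounded_integrable
      (((Real.continuous_rpow_const (by linarith : (0:ℝ) ≤ p)).measurable.comp
        ((haseq n).1.sub ha.1).abs)).aestronglyMeasurable
      (B := (Lam - lam) ^ (p - 1) * (Lam - lam))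
    filter_upwards [hptw n, ha_sub_bd n] with x h1 h2
    show |(|aseq n x - a x| ^ p)| ≤ _
    rw [abs_of_nonneg (Real.rpow_nonneg (abs_nonneg _) p)]
    exact h1.trans (mul_le_mul_of_nonneg_left h2 (Real.rpow_nonneg hK0 _))
  apply squeeze_zero
    (fun n => integral_nonneg (fun x => Real.rpow_nonneg (abs_nonneg _) p))
    (fun n => ?_) (by simpa using hL1.const_mul ((Lam - lam) ^ (p - 1)))
  calc (∫ x in Ioo (0:ℝ) 1, |aseq n x - a x| ^ p)
      ≤ ∫ x in Ioo (0:ℝ) 1, (Lam - lam) ^ (p - 1) * |aseq n x - a x| :=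
        integral_mono_ae (hint_p n) ((hab_int n).const_mul _) (hptw n)
    _ = (Lam - lam) ^ (p - 1) * ∫ x in Ioo (0:ℝ) 1, |aseq n x - a x| :=
        integral_const_mul _ _
end
end

section
/- Let f ∈ L¹(0,1) with f(x) ≠ 0 for almost every x ∈ (0,1), and let a, b ∈ 𝒜 with associated solutions u_a and u_b. If u_a(x) = u_b(x) for all x ∈ [0,1], then a(x) = b(x) for almost every x ∈ (0,1). -/
open MeasureTheory Set Filter

noncomputable section

open Topology ENNReal


theorem ae_hasDerivAt_primitive (g : ℝ → ℝ) (hg : Integrable g) :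
    ∀ᵐ x : ℝ, HasDerivAt (fun y => ∫ t in (0:ℝ)..y, g t) (g x) x := by
  filter_upwards [IsUnifLocDoublingMeasure.ae_tendsto_average (μ := volume)
    hg.locallyIntegrable 1] with x hx
  rw [hasDerivAt_iff_tendsto_slope]
  have hδ : Tendsto (fun y : ℝ => |y - x| / 2) (𝓝[≠] x) (𝓝[>] 0) := by
    rw [tendsto_nhdsWithin_iff]
    constructor
    · have : Tendsto (fun y : ℝ => |y - x| / 2) (𝓝 x) (𝓝 (|x - x| / 2)) :=
        (((continuous_id.sub continuous_const).abs.div_const 2).tendsto x)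
      simp only [sub_self, abs_zero, zero_div] at this
      exact this.mono_left nhdsWithin_le_nhds
    · filter_upwards [self_mem_nhdsWithin] with y hy
      have h0 : y - x ≠ 0 := sub_ne_zero.mpr hy
      exact mem_Ioi.mpr (by positivity)
  have hw : ∀ᶠ y in 𝓝[≠] x, x ∈ Metric.closedBall ((x + y) / 2) (1 * (|y - x| / 2)) := by
    filter_upwards with y
    rw [Metric.mem_closedBall, Real.dist_eq]
    rw [show x - (x + y) / 2 = (x - y) / 2 by ring, abs_div, abs_sub_comm]
    simp
  have key := hx (fun y : ℝ => (x + y) / 2) (fun y => |y - x| / 2) hδ hw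
  refine key.congr' ?_
  filter_upwards [self_mem_nhdsWithin] with y (hy : y ≠ x)
  have hIcc : Metric.closedBall ((x + y) / 2) (|y - x| / 2) = Icc (min x y) (max x y) := by
    rw [Real.closedBall_eq_Icc]
    rcases le_total x y with h | h
    · rw [abs_of_nonneg (by linarith), min_eq_left h, max_eq_right h]
      congr 1 <;> ring
    · rw [abs_of_nonpos (by linarith), min_eq_right h, max_eq_left h]
      congr 1 <;> ring
  rw [hIcc, setAverage_eq]
  have hvol : (volume (Icc (min x y) (max x y))).toReal = |y - x| := by
    rw [Real.volume_Icc, ENNReal.toReal_ofReal (by rcases le_total x y with h | h <;>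
      simp [min_eq_left, min_eq_right, max_eq_left, max_eq_right, h, sub_nonneg])]
    rcases le_total x y with h | h
    · rw [min_eq_left h, max_eq_right h, abs_of_nonneg (by linarith)]
    · rw [min_eq_right h, max_eq_left h, abs_of_nonpos (by linarith)]
      ring
  rw [measureReal_def, hvol]
  have hsub : (∫ t in (0:ℝ)..y, g t) - ∫ t in (0:ℝ)..x, g t = ∫ t in x..y, g t := by
    rw [intervalIntegral.integral_interval_sub_left hg.intervalIntegrable
      hg.intervalIntegrable]
  rw [slope_def_field, div_eq_inv_mul, hsub]
  have hne : y - x ≠ 0 := sub_ne_zero.mpr hy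
  rcases le_total x y with h | h
  · rw [min_eq_left h, max_eq_right h, abs_of_nonneg (by linarith),
      intervalIntegral.integral_of_le h, ← integral_Icc_eq_integral_Ioc]
    simp [smul_eq_mul, mul_comm]
  · rw [min_eq_right h, max_eq_left h, abs_of_nonpos (by linarith),
      intervalIntegral.integral_symm, intervalIntegral.integral_of_le h,
      ← integral_Icc_eq_integral_Ioc, smul_eq_mul, ← neg_inv]
    ring


theorem level_set_null (g : ℝ → ℝ) (hg : Integrable g)
    (hgne : ∀ᵐ x ∂(volume.restrict (Ioo (0:ℝ) 1)), g x ≠ 0) (C : ℝ) :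
    ∀ᵐ x ∂(volume.restrict (Ioo (0:ℝ) 1)), (∫ t in (0:ℝ)..x, g t) ≠ C := by
  set G : ℝ → ℝ := fun y => ∫ t in (0:ℝ)..y, g t with hG
  have hGcont : Continuous G := hg.continuous_primitive 0
  set E : Set ℝ := Ioo (0:ℝ) 1 ∩ G ⁻¹' {C} with hE
  have hEmeas : MeasurableSet E :=
    measurableSet_Ioo.inter (hGcont.measurable (measurableSet_singleton C))
  have hEsub : E ⊆ Ioo (0:ℝ) 1 := inter_subset_left
  have hEnull : volume E = 0 := by
    have hae : ∀ᵐ x ∂(volume.restrict E), False := by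
      filter_upwards [Besicovitch.ae_tendsto_measure_inter_div volume E,
        ae_restrict_of_ae (ae_hasDerivAt_primitive g hg),
        ae_restrict_of_ae_restrict_of_subset hEsub hgne,
        ae_restrict_mem hEmeas] with x hdens hder hne hmem
      -- x is an accumulation point of E
      have hNB : (𝓝[E \ {x}] x).NeBot := by
        by_contra hbot
        rw [not_neBot] at hbot
        have h0 : (∅ : Set ℝ) ∈ 𝓝[E \ {x}] x := by rw [hbot]; exact mem_bot
        rw [mem_nhdsWithin] at h0
        obtain ⟨u, hu, hxu, huE⟩ := h0
        obtain ⟨ε, hε, hball⟩ := Metric.isOpen_iff.mp hu x hxu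
        have hzero : ∀ᶠ r in 𝓝[>] (0:ℝ),
            volume (E ∩ Metric.closedBall x r) / volume (Metric.closedBall x r) = 0 := by
          filter_upwards [Ioo_mem_nhdsGT (half_pos hε)] with r hr
          have hsubball : E ∩ Metric.closedBall x r ⊆ {x} := by
            intro y ⟨hyE, hyb⟩
            by_contra hyx
            have : y ∈ u ∩ (E \ {x}) :=
              ⟨hball (lt_of_le_of_lt (Metric.mem_closedBall.mp hyb) (by linarith [hr.2])),
                hyE, hyx⟩
            exact huE this
          have : volume (E ∩ Metric.closedBall x r) = 0 :=
            le_antisymm (le_trans (measure_mono hsubball) (by simp)) zero_le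
          rw [this, ENNReal.zero_div]
        have h1 : Tendsto (fun _ : ℝ => (0:ℝ≥0∞)) (𝓝[>] (0:ℝ)) (𝓝 1) := hdens.congr' hzero
        exact zero_ne_one (tendsto_nhds_unique tendsto_const_nhds h1)
      -- slope is 0 along E \ {x}
      have hslope : Tendsto (slope G x) (𝓝[E \ {x}] x) (𝓝 (g x)) :=
        (hasDerivAt_iff_tendsto_slope.mp hder).mono_left
          (nhdsWithin_mono x (fun y hy => hy.2))
      have hslope0 : Tendsto (slope G x) (𝓝[E \ {x}] x) (𝓝 0) := by
        refine Tendsto.congr' ?_ tendsto_const_nhds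
        filter_upwards [self_mem_nhdsWithin] with y hy
        have hGy : G y = C := hy.1.2
        have hGx : G x = C := hmem.2
        simp [slope_def_field, hGy, hGx]
      haveI := hNB
      exact hne (tendsto_nhds_unique hslope hslope0)
    have h0 : volume.restrict E univ = 0 := by simpa [Set.setOf_true] using ae_iff.mp hae
    rwa [Measure.restrict_apply_univ] at h0
  rw [ae_restrict_iff' measurableSet_Ioo, ae_iff]
  refine measure_mono_null ?_ hEnull
  intro x hx
  simp only [mem_setOf_eq, Classical.not_imp, not_not] at hx
  exact ⟨hx.1, hx.2⟩

theorem Cconst_mem_Icc (lam Lam : ℝ) (hlam : 0 < lam) (hlamLam : lam ≤ Lam)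
    (f a : ℝ → ℝ) (ha : MemAdm lam Lam a) (G : ℝ → ℝ) (hGcont : Continuous G)
    (hFG : ∀ x ∈ Icc (0:ℝ) 1, Fprim f x = G x)
    (xm xM : ℝ) (hxm : xm ∈ Icc (0:ℝ) 1) (hxM : xM ∈ Icc (0:ℝ) 1)
    (hmin : ∀ y ∈ Icc (0:ℝ) 1, G xm ≤ G y) (hmax : ∀ y ∈ Icc (0:ℝ) 1, G y ≤ G xM) :
    Cconst f a ∈ Icc (G xm) (G xM) := by
  have hLam : 0 < Lam := lt_of_lt_of_le hlam hlamLam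
  haveI : IsFiniteMeasure (volume.restrict (Ioo (0:ℝ) 1)) := by
    constructor
    rw [Measure.restrict_apply_univ, Real.volume_Ioo]
    exact ENNReal.ofReal_lt_top
  have hbnd := ha.2
  have ma : Measurable a := ha.1
  have int_a : Integrable (fun x => 1 / a x) (volume.restrict (Ioo (0:ℝ) 1)) := by
    refine Integrable.mono' (integrable_const (1/lam))
      ((measurable_const.div ma).aestronglyMeasurable) ?_
    filter_upwards [hbnd] with x hx
    have hax : 0 < a x := lt_of_lt_of_le hlam hx.1
    rw [Real.norm_eq_abs, abs_of_nonneg (by positivity)]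
    exact one_div_le_one_div_of_le hlam hx.1
  have hIpos : 0 < ∫ x in Ioo (0:ℝ) 1, 1 / a x := by
    have hconst : ∫ _ in Ioo (0:ℝ) 1, (1/Lam) = 1/Lam := by
      rw [setIntegral_const, Real.volume_real_Ioo]
      norm_num
    have hmono : ∫ _ in Ioo (0:ℝ) 1, (1/Lam) ≤ ∫ x in Ioo (0:ℝ) 1, 1 / a x := by
      refine integral_mono_ae (integrable_const _) int_a ?_
      filter_upwards [hbnd] with x hx
      exact one_div_le_one_div_of_le (lt_of_lt_of_le hlam hx.1) hx.2
    rw [hconst] at hmono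
    have : 0 < 1/Lam := by positivity
    linarith
  obtain ⟨B, hB⟩ := (isCompact_Icc : IsCompact (Icc (0:ℝ) 1)).exists_bound_of_continuousOn hGcont.continuousOn
  have hB0 : 0 ≤ B := le_trans (norm_nonneg _) (hB 0 (by norm_num))
  have int_G : Integrable (fun x => G x / a x) (volume.restrict (Ioo (0:ℝ) 1)) := by
    refine Integrable.mono' (integrable_const (B/lam))
      ((hGcont.measurable.div ma).aestronglyMeasurable) ?_
    filter_upwards [hbnd, ae_restrict_mem measurableSet_Ioo] with x hx hxI
    have hax : 0 < a x := lt_of_lt_of_le hlam hx.1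
    rw [Real.norm_eq_abs, abs_div, abs_of_pos hax]
    exact div_le_div₀ hB0 (hB x (Ioo_subset_Icc_self hxI)) hlam hx.1
  have hC : Cconst f a = (∫ x in Ioo (0:ℝ) 1, 1 / a x)⁻¹ * ∫ x in Ioo (0:ℝ) 1, G x / a x := by
    unfold Cconst
    congr 1
    refine setIntegral_congr_fun measurableSet_Ioo fun x hx => ?_
    rw [hFG x (Ioo_subset_Icc_self hx)]
  constructor
  · have hlow : ∫ x in Ioo (0:ℝ) 1, G xm * (1 / a x) ≤ ∫ x in Ioo (0:ℝ) 1, G x / a x := by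
      refine integral_mono_ae (int_a.const_mul _) int_G ?_
      filter_upwards [hbnd, ae_restrict_mem measurableSet_Ioo] with x hx hxI
      have hax : 0 < a x := lt_of_lt_of_le hlam hx.1
      rw [mul_one_div]
      gcongr
      exact hmin x (Ioo_subset_Icc_self hxI)
    rw [integral_const_mul] at hlow
    rw [hC]
    have h2 : (∫ x in Ioo (0:ℝ) 1, 1 / a x)⁻¹ * (G xm * ∫ x in Ioo (0:ℝ) 1, 1 / a x)
        ≤ (∫ x in Ioo (0:ℝ) 1, 1 / a x)⁻¹ * ∫ x in Ioo (0:ℝ) 1, G x / a x :=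
      mul_le_mul_of_nonneg_left hlow (inv_nonneg.mpr hIpos.le)
    calc G xm = (∫ x in Ioo (0:ℝ) 1, 1 / a x)⁻¹ * (G xm * ∫ x in Ioo (0:ℝ) 1, 1 / a x) := by
          field_simp
      _ ≤ _ := h2
  · have hup : ∫ x in Ioo (0:ℝ) 1, G x / a x ≤ ∫ x in Ioo (0:ℝ) 1, G xM * (1 / a x) := by
      refine integral_mono_ae int_G (int_a.const_mul _) ?_
      filter_upwards [hbnd, ae_restrict_mem measurableSet_Ioo] with x hx hxI
      have hax : 0 < a x := lt_of_lt_of_le hlam hx.1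
      rw [mul_one_div]
      gcongr
      exact hmax x (Ioo_subset_Icc_self hxI)
    rw [integral_const_mul] at hup
    rw [hC]
    have h2 : (∫ x in Ioo (0:ℝ) 1, 1 / a x)⁻¹ * ∫ x in Ioo (0:ℝ) 1, G x / a x
        ≤ (∫ x in Ioo (0:ℝ) 1, 1 / a x)⁻¹ * (G xM * ∫ x in Ioo (0:ℝ) 1, 1 / a x) :=
      mul_le_mul_of_nonneg_left hup (inv_nonneg.mpr hIpos.le)
    calc (∫ x in Ioo (0:ℝ) 1, 1 / a x)⁻¹ * ∫ x in Ioo (0:ℝ) 1, G x / a x ≤ _ := h2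
      _ = G xM := by field_simp

theorem no_strict_lt (lam : ℝ) (hlam : 0 < lam) (a b G : ℝ → ℝ) (hGcont : Continuous G)
    (C₁ C₂ : ℝ)
    (hkey : ∀ᵐ x ∂(volume.restrict (Ioo (0:ℝ) 1)),
      lam ≤ a x ∧ lam ≤ b x ∧ b x * (C₁ - G x) = a x * (C₂ - G x))
    (hlt : C₂ < C₁) (x₀ : ℝ) (hx₀ : x₀ ∈ Icc (0:ℝ) 1) (hGx₀ : G x₀ = (C₁ + C₂) / 2) :
    False := by
  have hε : 0 < (C₁ - C₂) / 2 := by linarith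
  obtain ⟨δ, hδ, hcont⟩ := Metric.continuous_iff.mp hGcont x₀ ((C₁ - C₂) / 2) hε
  set l := max 0 (x₀ - δ) with hl
  set r := min 1 (x₀ + δ) with hr
  have hx₀0 : (0:ℝ) ≤ x₀ := hx₀.1
  have hx₀1 : x₀ ≤ 1 := hx₀.2
  have hlr : l < r := by
    apply max_lt <;> apply lt_min <;> [skip; skip; skip; skip] <;> linarith
  have hSsub : Ioo l r ⊆ Ioo (0:ℝ) 1 := Ioo_subset_Ioo (le_max_left _ _) (min_le_left _ _)
  have hSpos : volume.restrict (Ioo (0:ℝ) 1) (Ioo l r) ≠ 0 := by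
    rw [Measure.restrict_apply measurableSet_Ioo, inter_eq_left.mpr hSsub, Real.volume_Ioo]
    exact (ENNReal.ofReal_pos.mpr (by linarith)).ne'
  have hN : volume.restrict (Ioo (0:ℝ) 1)
      {x | ¬(lam ≤ a x ∧ lam ≤ b x ∧ b x * (C₁ - G x) = a x * (C₂ - G x))} = 0 :=
    ae_iff.mp hkey
  have hns : ¬ (Ioo l r ⊆
      {x | ¬(lam ≤ a x ∧ lam ≤ b x ∧ b x * (C₁ - G x) = a x * (C₂ - G x))}) := by
    intro hsub
    exact hSpos (le_antisymm (le_trans (measure_mono hsub) hN.le) zero_le)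
  obtain ⟨x, hxS, hxN⟩ := not_subset.mp hns
  have hP : lam ≤ a x ∧ lam ≤ b x ∧ b x * (C₁ - G x) = a x * (C₂ - G x) := by
    by_contra h
    exact hxN h
  obtain ⟨h1, h2, h3⟩ := hP
  have hdist : dist x x₀ < δ := by
    rw [Real.dist_eq, abs_lt]
    have e1 := le_max_right 0 (x₀ - δ)
    have e2 := min_le_right 1 (x₀ + δ)
    have := hxS.1
    have := hxS.2
    constructor <;> simp only [hl, hr] at * <;> linarith
  have hGx := hcont x hdist
  rw [Real.dist_eq, hGx₀, abs_lt] at hGx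
  have hL : 0 < b x * (C₁ - G x) := mul_pos (by linarith) (by linarith [hGx.2])
  have hR : a x * (C₂ - G x) < 0 := mul_neg_of_pos_of_neg (by linarith) (by linarith [hGx.1])
  linarith [h3]

/-- One-dimensional identifiability: if `f ≠ 0` a.e. and `u_a = u_b` on `[0,1]`,
then `a = b` a.e. on `(0,1)`. -/
theorem one_dimensional_identifiability (lam Lam : ℝ) (hlam : 0 < lam) (hlamLam : lam ≤ Lam)
    (f : ℝ → ℝ) (hf : IntegrableOn f (Ioo (0 : ℝ) 1))
    (hfne : ∀ᵐ x ∂(volume.restrict (Ioo (0 : ℝ) 1)), f x ≠ 0)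
    (a b : ℝ → ℝ) (ha : MemAdm lam Lam a) (hb : MemAdm lam Lam b)
    (ua ub : ℝ → ℝ) (hua : IsSol f a ua) (hub : IsSol f b ub)
    (heq : ∀ x ∈ Icc (0 : ℝ) 1, ua x = ub x) :
    ∀ᵐ x ∂(volume.restrict (Ioo (0 : ℝ) 1)), a x = b x := by
  set g := (Ioo (0:ℝ) 1).indicator f with hg
  have hgInt : Integrable g := (integrable_indicator_iff measurableSet_Ioo).mpr hf
  set G : ℝ → ℝ := fun y => ∫ t in (0:ℝ)..y, g t with hGdef
  have hGcont : Continuous G := hgInt.continuous_primitive 0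
  have hFG : ∀ x ∈ Icc (0:ℝ) 1, Fprim f x = G x := by
    intro x hx
    refine intervalIntegral.integral_congr_ae ?_
    have hne1 : ∀ᵐ t : ℝ, t ≠ (1:ℝ) := by
      have hs : {t : ℝ | ¬ t ≠ 1} = {1} := by ext t; simp
      rw [ae_iff, hs]
      exact measure_singleton 1
    filter_upwards [hne1] with t ht hmem
    rw [uIoc_of_le hx.1] at hmem
    have htI : t ∈ Ioo (0:ℝ) 1 :=
      ⟨hmem.1, lt_of_le_of_ne (le_trans hmem.2 hx.2) ht⟩
    rw [hg, indicator_of_mem htI]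
  have hgne : ∀ᵐ x ∂(volume.restrict (Ioo (0:ℝ) 1)), g x ≠ 0 := by
    filter_upwards [hfne, ae_restrict_mem measurableSet_Ioo] with x h1 h2
    rw [hg, indicator_of_mem h2]
    exact h1
  have hdeq : ∀ x ∈ Ioo (0:ℝ) 1, deriv ua x = deriv ub x := by
    intro x hx
    apply Filter.EventuallyEq.deriv_eq
    filter_upwards [isOpen_Ioo.mem_nhds hx] with y hy
    exact heq y (Ioo_subset_Icc_self hy)
  have hkey : ∀ᵐ x ∂(volume.restrict (Ioo (0:ℝ) 1)),
      lam ≤ a x ∧ lam ≤ b x ∧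
        b x * (Cconst f a - G x) = a x * (Cconst f b - G x) := by
    filter_upwards [hua.2.2.2, hub.2.2.2, ha.2, hb.2, ae_restrict_mem measurableSet_Ioo]
      with x h1 h2 h3 h4 hx
    refine ⟨h3.1, h4.1, ?_⟩
    rw [← hFG x (Ioo_subset_Icc_self hx), ← h1.2, ← h2.2, hdeq x hx]
    ring
  obtain ⟨xM, hxM, hmax⟩ := (isCompact_Icc : IsCompact (Icc (0:ℝ) 1)).exists_isMaxOn
    ⟨0, by norm_num⟩ hGcont.continuousOn
  obtain ⟨xm, hxm, hmin⟩ := (isCompact_Icc : IsCompact (Icc (0:ℝ) 1)).exists_isMinOn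
    ⟨0, by norm_num⟩ hGcont.continuousOn
  have hmax' : ∀ y ∈ Icc (0:ℝ) 1, G y ≤ G xM := fun y hy => hmax hy
  have hmin' : ∀ y ∈ Icc (0:ℝ) 1, G xm ≤ G y := fun y hy => hmin hy
  have hC₁ := Cconst_mem_Icc lam Lam hlam hlamLam f a ha G hGcont hFG xm xM hxm hxM hmin' hmax'
  have hC₂ := Cconst_mem_Icc lam Lam hlam hlamLam f b hb G hGcont hFG xm xM hxm hxM hmin' hmax'
  have himage : Icc (G xm) (G xM) ⊆ G '' Icc (0:ℝ) 1 :=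
    IsPreconnected.Icc_subset ((isPreconnected_Icc).image G hGcont.continuousOn)
      (mem_image_of_mem _ hxm) (mem_image_of_mem _ hxM)
  have hCC : Cconst f a = Cconst f b := by
    rcases lt_trichotomy (Cconst f b) (Cconst f a) with h | h | h
    · obtain ⟨x₀, hx₀, hGx₀⟩ := himage (show (Cconst f a + Cconst f b)/2 ∈ Icc (G xm) (G xM) by
        constructor
        · linarith [hC₁.1, hC₂.1]
        · linarith [hC₁.2, hC₂.2])
      exact (no_strict_lt lam hlam a b G hGcont (Cconst f a) (Cconst f b) hkey h x₀ hx₀ hGx₀).elim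
    · exact h.symm
    · obtain ⟨x₀, hx₀, hGx₀⟩ := himage (show (Cconst f b + Cconst f a)/2 ∈ Icc (G xm) (G xM) by
        constructor
        · linarith [hC₁.1, hC₂.1]
        · linarith [hC₁.2, hC₂.2])
      have hkey' : ∀ᵐ x ∂(volume.restrict (Ioo (0:ℝ) 1)),
          lam ≤ b x ∧ lam ≤ a x ∧
            a x * (Cconst f b - G x) = b x * (Cconst f a - G x) := by
        filter_upwards [hkey] with x hx
        exact ⟨hx.2.1, hx.1, hx.2.2.symm⟩
      exact (no_strict_lt lam hlam b a G hGcont (Cconst f b) (Cconst f a) hkey' h x₀ hx₀ hGx₀).elim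
  have hlev := level_set_null g hgInt hgne (Cconst f a)
  filter_upwards [hkey, hlev] with x hx hx2
  obtain ⟨h1, h2, h3⟩ := hx
  rw [← hCC] at h3
  have hne : Cconst f a - G x ≠ 0 := sub_ne_zero.mpr (Ne.symm hx2)
  exact (mul_right_cancel₀ hne h3).symm
end
end

section
/- Let f ∈ L¹(0,1) with f(x) ≠ 0 for almost every x ∈ (0,1), let a ∈ 𝒜, and let u_a be the associated solution. Then u_a'(x) ≠ 0 for almost every x ∈ (0,1); equivalently, the set {x ∈ (0,1) : u_a is differentiable at x and u_a'(x) = 0} has Lebesgue measure zero. -/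
open MeasureTheory Set Filter Topology

noncomputable section

/-- If `f ≠ 0` a.e. on `(0,1)`, then any level set of the primitive `F` inside `(0,1)`
is Lebesgue-null. -/
theorem level_set_primitive_null (f : ℝ → ℝ) (hf : IntegrableOn f (Ioo (0 : ℝ) 1))
    (hfne : ∀ᵐ x ∂(volume.restrict (Ioo (0 : ℝ) 1)), f x ≠ 0) (C : ℝ) :
    volume (Ioo (0 : ℝ) 1 ∩ Fprim f ⁻¹' {C}) = 0 := by
  set s : Set ℝ := Ioo (0 : ℝ) 1 ∩ Fprim f ⁻¹' {C} with hs_def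
  have hsIoo : s ⊆ Ioo (0 : ℝ) 1 := inter_subset_left
  -- continuity of the primitive on `[0,1]`
  have hfIcc : IntegrableOn f (Icc (0 : ℝ) 1) := hf.congr_set_ae Ioo_ae_eq_Icc.symm
  have hFc : ContinuousOn (Fprim f) (Icc (0 : ℝ) 1) := by
    have h01 : uIcc (0 : ℝ) 1 = Icc (0 : ℝ) 1 := uIcc_of_le (by norm_num)
    have := intervalIntegral.continuousOn_primitive_interval
      (a := (0 : ℝ)) (b := 1) (μ := volume) (f := f) (by rw [h01]; exact hfIcc)
    rw [h01] at this
    exact this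
  -- measurability of `s`
  have hs_meas : MeasurableSet s := by
    have hK : IsClosed (Icc (0 : ℝ) 1 ∩ Fprim f ⁻¹' {C}) :=
      hFc.preimage_isClosed_of_isClosed isClosed_Icc isClosed_singleton
    have heq : s = Ioo (0 : ℝ) 1 ∩ (Icc (0 : ℝ) 1 ∩ Fprim f ⁻¹' {C}) := by
      ext x
      simp only [hs_def, mem_inter_iff, mem_Ioo, mem_Icc, mem_preimage]
      constructor
      · rintro ⟨hx, h⟩; exact ⟨hx, ⟨hx.1.le, hx.2.le⟩, h⟩
      · rintro ⟨hx, _, h⟩; exact ⟨hx, h⟩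
    rw [heq]
    exact measurableSet_Ioo.inter hK.measurableSet
  -- globally integrable version of `f`
  set f1 : ℝ → ℝ := (Ioo (0 : ℝ) 1).indicator f with hf1_def
  have hf1_int : Integrable f1 volume :=
    (integrable_indicator_iff measurableSet_Ioo).2 hf
  -- a.e. facts with respect to `volume.restrict s`
  have h1 := Besicovitch.ae_tendsto_measure_inter_div volume s
  have h2 : ∀ᵐ x ∂volume.restrict s,
      Tendsto (fun r => ⨍ y in Metric.closedBall x r, ‖f1 y - f1 x‖) (𝓝[>] 0) (𝓝 0) := by
    refine ae_restrict_of_ae ?_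
    filter_upwards [IsUnifLocDoublingMeasure.ae_tendsto_average_norm_sub
      (μ := volume) hf1_int.locallyIntegrable 1] with x hx
    refine hx (fun _ => x) id tendsto_id ?_
    filter_upwards [self_mem_nhdsWithin] with r (hr : 0 < r)
    exact Metric.mem_closedBall_self (by simpa using hr.le)
  have h3 : ∀ᵐ x ∂volume.restrict s, f1 x ≠ 0 := by
    refine ae_restrict_of_ae_restrict_of_subset hsIoo ?_
    filter_upwards [hfne, ae_restrict_mem measurableSet_Ioo] with x hx hx'
    simpa [hf1_def, indicator_of_mem hx'] using hx
  have h4 := ae_restrict_mem (μ := volume) hs_meas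
  -- main claim: a.e. point of `s` leads to a contradiction
  have hFalse : ∀ᵐ x ∂volume.restrict s, False := by
    filter_upwards [h1, h2, h3, h4] with x hx1 hx2 hx3 hx4
    have hc : 0 < |f1 x| := abs_pos.2 hx3
    -- choose a good radius
    have E1 : ∀ᶠ r in 𝓝[>] (0 : ℝ),
        (⨍ y in Metric.closedBall x r, ‖f1 y - f1 x‖) < |f1 x| / 8 :=
      hx2.eventually_lt_const (by positivity)
    have E2 : ∀ᶠ r in 𝓝[>] (0 : ℝ), ENNReal.ofReal (3 / 4) <
        volume (s ∩ Metric.closedBall x r) / volume (Metric.closedBall x r) :=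
      hx1.eventually_const_lt (ENNReal.ofReal_lt_one.2 (by norm_num))
    obtain ⟨r, hE1, hE2, (hr : 0 < r)⟩ := (E1.and (E2.and self_mem_nhdsWithin)).exists
    have hball : volume (Metric.closedBall x r) = ENNReal.ofReal (2 * r) :=
      Real.volume_closedBall x r
    -- find a point of `s` in the ball, far from `x`
    have hy : ∃ y ∈ s ∩ Metric.closedBall x r, r / 2 < |y - x| := by
      by_contra hcon
      push_neg at hcon
      have hsub : s ∩ Metric.closedBall x r ⊆ Metric.closedBall x (r / 2) := by
        intro y hy'
        have := hcon y hy'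
        rw [Metric.mem_closedBall, Real.dist_eq]
        exact this
      have hle : volume (s ∩ Metric.closedBall x r) ≤ ENNReal.ofReal r := by
        calc volume (s ∩ Metric.closedBall x r)
            ≤ volume (Metric.closedBall x (r / 2)) := measure_mono hsub
          _ = ENNReal.ofReal (2 * (r / 2)) := Real.volume_closedBall _ _
          _ = ENNReal.ofReal r := by ring_nf
      have hlt : ENNReal.ofReal (3 / 4) * volume (Metric.closedBall x r)
          < volume (s ∩ Metric.closedBall x r) := ENNReal.mul_lt_of_lt_div hE2
      have hlt' : ENNReal.ofReal r < ENNReal.ofReal (3 / 4) * ENNReal.ofReal (2 * r) := by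
        rw [← ENNReal.ofReal_mul (by norm_num)]
        exact (ENNReal.ofReal_lt_ofReal_iff (by linarith)).2 (by linarith)
      rw [hball] at hlt
      exact absurd hle (not_le.2 (hlt'.trans hlt))
    obtain ⟨y, ⟨hys, hyball⟩, hyfar⟩ := hy
    have hxIoo : x ∈ Ioo (0 : ℝ) 1 := hx4.1
    have hyIoo : y ∈ Ioo (0 : ℝ) 1 := hys.1
    have hxF : Fprim f x = C := hx4.2
    have hyF : Fprim f y = C := hys.2
    -- the interval from `x` to `y` lies in `(0,1)` and in the closed ball
    have hI : uIcc x y ⊆ Ioo (0 : ℝ) 1 := Set.ordConnected_Ioo.uIcc_subset hxIoo hyIoo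
    have hIball : uIcc x y ⊆ Metric.closedBall x r := by
      rw [Real.closedBall_eq_Icc]
      refine Set.ordConnected_Icc.uIcc_subset ?_ ?_
      · constructor <;> linarith
      · have := hyball
        rw [Metric.mem_closedBall, Real.dist_eq, abs_le] at this
        constructor <;> linarith [this.1, this.2]
    -- the integral of `f` from `x` to `y` vanishes
    have hint0x : IntervalIntegrable f volume 0 x := by
      rw [intervalIntegrable_iff, uIoc_of_le hxIoo.1.le]
      exact hf.mono_set (fun t ht => ⟨ht.1, lt_of_le_of_lt ht.2 hxIoo.2⟩)
    have hint0y : IntervalIntegrable f volume 0 y := by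
      rw [intervalIntegrable_iff, uIoc_of_le hyIoo.1.le]
      exact hf.mono_set (fun t ht => ⟨ht.1, lt_of_le_of_lt ht.2 hyIoo.2⟩)
    have hF0 : (∫ t in x..y, f t) = 0 := by
      rw [← intervalIntegral.integral_interval_sub_left hint0y hint0x]
      have h1' : (∫ t in (0:ℝ)..y, f t) = C := hyF
      have h2' : (∫ t in (0:ℝ)..x, f t) = C := hxF
      rw [h1', h2', sub_self]
    have hcong : (∫ t in x..y, f t) = ∫ t in x..y, f1 t :=
      intervalIntegral.integral_congr (fun t ht => (indicator_of_mem (hI ht) f).symm)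
    have hf1I : IntervalIntegrable f1 volume x y := intervalIntegrable_iff.2 hf1_int.integrableOn
    have hnormint : IntegrableOn (fun t => ‖f1 t - f1 x‖) (Metric.closedBall x r) volume :=
      (hf1_int.integrableOn.sub (integrableOn_const measure_closedBall_lt_top.ne)).norm
    -- key estimate
    have key : |f1 x| * |y - x| ≤ ∫ t in Metric.closedBall x r, ‖f1 t - f1 x‖ := by
      have e0 : (∫ t in x..y, f1 t) = 0 := by rw [← hcong]; exact hF0
      have e1 : (∫ t in x..y, (f1 x - f1 t)) = (y - x) * f1 x := by
        rw [intervalIntegral.integral_sub (intervalIntegrable_const) hf1I, e0,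
          intervalIntegral.integral_const, smul_eq_mul, sub_zero]
      calc |f1 x| * |y - x|
          = ‖∫ t in x..y, (f1 x - f1 t)‖ := by
            rw [e1, Real.norm_eq_abs, abs_mul, mul_comm]
        _ ≤ ∫ t in Set.uIoc x y, ‖f1 x - f1 t‖ :=
            intervalIntegral.norm_integral_le_integral_norm_uIoc
        _ = ∫ t in Set.uIoc x y, ‖f1 t - f1 x‖ := by simp_rw [norm_sub_rev]
        _ ≤ ∫ t in Metric.closedBall x r, ‖f1 t - f1 x‖ := by
            refine setIntegral_mono_set hnormint
              (Eventually.of_forall fun t => norm_nonneg _) ?_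
            exact HasSubset.Subset.eventuallyLE (uIoc_subset_uIcc.trans hIball)
    -- compare with the small average
    have htoReal : (volume (Metric.closedBall x r)).toReal = 2 * r := by
      rw [hball, ENNReal.toReal_ofReal (by linarith)]
    have havg : (∫ t in Metric.closedBall x r, ‖f1 t - f1 x‖)
        = (2 * r) * ⨍ t in Metric.closedBall x r, ‖f1 t - f1 x‖ := by
      rw [setAverage_eq, smul_eq_mul, measureReal_def, htoReal]
      field_simp
    have hsmall : (∫ t in Metric.closedBall x r, ‖f1 t - f1 x‖) < 2 * r * (|f1 x| / 8) := by
      rw [havg]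
      exact mul_lt_mul_of_pos_left hE1 (by linarith)
    nlinarith [key, hsmall, hc, hr, hyfar, abs_nonneg (f1 x)]
  -- conclude that `s` is null
  have := ae_iff.1 hFalse
  simpa [Measure.restrict_apply_univ] using this

/-- If `f ≠ 0` a.e. on `(0,1)`, then the derivative of the associated solution is nonzero
almost everywhere: the set where `u_a` is differentiable with vanishing derivative is null. -/
theorem deriv_solution_ae_nonzero (lam Lam : ℝ) (hlam : 0 < lam) (hlamLam : lam ≤ Lam)
    (f : ℝ → ℝ) (hf : IntegrableOn f (Ioo (0 : ℝ) 1))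
    (hfne : ∀ᵐ x ∂(volume.restrict (Ioo (0 : ℝ) 1)), f x ≠ 0)
    (a : ℝ → ℝ) (ha : MemAdm lam Lam a)
    (ua : ℝ → ℝ) (hua : IsSol f a ua) :
    volume {x ∈ Ioo (0 : ℝ) 1 | DifferentiableAt ℝ ua x ∧ deriv ua x = 0} = 0 := by
  classical
  set C := Cconst f a with hC
  set s : Set ℝ := Ioo (0 : ℝ) 1 ∩ Fprim f ⁻¹' {C} with hs_def
  have hlevel : volume s = 0 := level_set_primitive_null f hf hfne C
  set T : Set ℝ := {x ∈ Ioo (0 : ℝ) 1 | DifferentiableAt ℝ ua x ∧ deriv ua x = 0} with hT_def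
  have hT_meas : MeasurableSet T := by
    have hd : MeasurableSet {x | DifferentiableAt ℝ ua x} :=
      measurableSet_of_differentiableAt ℝ ua
    have hder : Measurable (deriv ua) := measurable_deriv ua
    have : T = Ioo (0 : ℝ) 1 ∩ ({x | DifferentiableAt ℝ ua x} ∩ deriv ua ⁻¹' {0}) := by
      ext x
      simp only [hT_def, mem_sep_iff, mem_inter_iff, mem_setOf_eq, mem_preimage,
        mem_singleton_iff]
      try tauto
    rw [this]
    exact measurableSet_Ioo.inter (hd.inter (hder (measurableSet_singleton 0)))
  have hTIoo : T ⊆ Ioo (0 : ℝ) 1 := sep_subset _ _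
  -- a.e. on (0,1), points of T lie in s
  have hsubae : ∀ᵐ x ∂(volume.restrict (Ioo (0 : ℝ) 1)), x ∉ T \ s := by
    filter_upwards [hua.2.2.2] with x hx
    rintro ⟨hxT, hxs⟩
    refine hxs ⟨hxT.1, ?_⟩
    have h := hx.2
    rw [hxT.2.2, mul_zero] at h
    simp only [mem_preimage, mem_singleton_iff]
    linarith
  have hnull : volume.restrict (Ioo (0 : ℝ) 1) (T \ s) = 0 :=
    measure_eq_zero_iff_ae_notMem.2 hsubae
  have hTr : volume T = volume.restrict (Ioo (0 : ℝ) 1) T := by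
    rw [Measure.restrict_apply hT_meas, inter_eq_self_of_subset_left hTIoo]
  have hchain : volume.restrict (Ioo (0 : ℝ) 1) T ≤
      volume.restrict (Ioo (0 : ℝ) 1) (T \ s) + volume.restrict (Ioo (0 : ℝ) 1) s := by
    refine le_trans (measure_mono ?_) (measure_union_le _ _)
    intro x hx
    by_cases h : x ∈ s
    · exact Or.inr h
    · exact Or.inl ⟨hx, h⟩
  have hfinal : volume T ≤ 0 := by
    rw [hTr]
    calc volume.restrict (Ioo (0 : ℝ) 1) T
        ≤ volume.restrict (Ioo (0 : ℝ) 1) (T \ s) + volume.restrict (Ioo (0 : ℝ) 1) s := hchain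
      _ ≤ 0 + volume s := by
          exact add_le_add hnull.le (Measure.restrict_apply_le _ _)
      _ = 0 := by rw [hlevel, zero_add]
  exact le_antisymm hfinal zero_le
end
end
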